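/- arXiv:2112.11310 — 3 statements merged into one kernel-verified Lean document; each statement's English description precedes it below -/
import Mathlib

section
/- If φ: G(X) → E(S¹) is a skeleton mapping into a semigroup S, then there is a unique semigroup homomorphism φ̄: FT¹(X) → S¹ extending φ (i.e. [g]φ̄ = gφ for all g ∈ G(X)); moreover the image (FT¹(X))φ̄ = ⟨(G(X))φ⟩ is a regular subsemigroup of S¹ which is a monoid with identity element 1φ. -/
/-! Common definitions: the construction of `G(X)`, words, the congruence `ρ`,
the monoid `FT¹(X)`, landscapes, mountains, the maps `β₁, β₂, β`, Green's
relations, sandwich sets, etc. -/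

/-- Nested triples over `X` together with the extra symbol `1`. -/
inductive PreG (X : Type) : Type where
  | one : PreG X
  | base : X → PreG X
  | node : PreG X → PreG X → PreG X → PreG X

namespace PreG

variable {X : Type}

/-- The height `⋏(g)`. -/
def ht : PreG X → ℕ
  | one => 0
  | base _ => 1
  | node l _ _ => ht l + 1

/-- The left entry `g^l` (with `1^l = 1` and `x^l = 1` for `x ∈ X`). -/
def left : PreG X → PreG X
  | one => one
  | base _ => one
  | node l _ _ => l

/-- The right entry `g^r`. -/
def right : PreG X → PreG X
  | one => one
  | base _ => one
  | node _ _ r => r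

/-- The central entry `g^c` (with `x^c = x` for `x ∈ X` via `x = (1,x,1)`). -/
def center : PreG X → PreG X
  | one => one
  | base x => base x
  | node _ c _ => c

/-- Membership in `G(X) = ⋃_{i≥0} G_i(X)`. -/
inductive IsG : PreG X → Prop
  | one : IsG one
  | base (x : X) : IsG (base x)
  | node {l c r : PreG X} :
      IsG l → IsG c → IsG r →
      1 ≤ l.ht → l.ht = r.ht → c.ht + 1 = l.ht →
      l ≠ r →
      (c = l.left ∨ c = l.right) →
      (c = r.left ∨ c = r.right) →
      IsG (node l c r)

theorem IsG.left_isG {g : PreG X} (h : g.IsG) : g.left.IsG := by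
  cases h with
  | one => exact .one
  | base x => exact .one
  | node hl hc hr h1 h2 h3 h4 h5 h6 => exact hl

theorem IsG.right_isG {g : PreG X} (h : g.IsG) : g.right.IsG := by
  cases h with
  | one => exact .one
  | base x => exact .one
  | node hl hc hr h1 h2 h3 h4 h5 h6 => exact hr

theorem IsG.center_isG {g : PreG X} (h : g.IsG) : g.center.IsG := by
  cases h with
  | one => exact .one
  | base x => exact .base x
  | node hl hc hr h1 h2 h3 h4 h5 h6 => exact hc

/-- The ground `ε(g)`. -/
def ground : PreG X → Set (PreG X)
  | one => {one}
  | base x => {one, base x}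
  | node l c r => ground l ∪ {node l c r} ∪ ground r

end PreG

/-- The set `G(X)`. -/
def Gx (X : Type) : Type := {g : PreG X // g.IsG}

namespace Gx

variable {X : Type}

/-- The letter `1`. -/
def gone : Gx X := ⟨PreG.one, .one⟩

instance : Inhabited (Gx X) := ⟨gone⟩

/-- The letter corresponding to `x ∈ X`. -/
def ofX (x : X) : Gx X := ⟨PreG.base x, .base x⟩

/-- `g^l`. -/
def l (g : Gx X) : Gx X := ⟨g.1.left, g.2.left_isG⟩

/-- `g^c`. -/
def c (g : Gx X) : Gx X := ⟨g.1.center, g.2.center_isG⟩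

/-- `g^r`. -/
def r (g : Gx X) : Gx X := ⟨g.1.right, g.2.right_isG⟩

/-- The height of `g`. -/
def ht (g : Gx X) : ℕ := g.1.ht

theorem ht_c_lt : ∀ {g : Gx X}, 2 ≤ g.ht → g.c.ht < g.ht := by
  rintro ⟨g0, hg⟩ h
  cases hg with
  | one => simp [Gx.ht, PreG.ht] at h
  | base x => simp [Gx.ht, PreG.ht] at h
  | node hl hc hr hht hlr hc1 hne hcl hcr =>
    simp only [Gx.ht, Gx.c, PreG.center, PreG.ht] at *
    omega

/-- The step relation of an uphill: `a ∈ {b^l, b^r}` for consecutive letters `a b`. -/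
def stepUp (a b : Gx X) : Prop := a = b.l ∨ a = b.r

/-- The step relation of a downhill: `b ∈ {a^l, a^r}` for consecutive letters `a b`. -/
def stepDown (a b : Gx X) : Prop := b = a.l ∨ b = a.r

/-- The left hill `λ_l(g)` of the mountain `β₁(g)`. -/
def lamL (g : Gx X) : List (Gx X) :=
  if h : 2 ≤ g.ht then lamL g.c ++ [g.l, g]
  else if g.ht = 0 then [g] else [gone, g]
termination_by g.ht
decreasing_by exact ht_c_lt h

/-- The right hill `λ_r(g)` of the mountain `β₁(g)`. -/
def lamR (g : Gx X) : List (Gx X) :=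
  if h : 2 ≤ g.ht then [g, g.r] ++ lamR g.c
  else if g.ht = 0 then [g] else [g, gone]
termination_by g.ht
decreasing_by exact ht_c_lt h

end Gx

/-- The free semigroup `G(X)⁺` on `G(X)`. -/
abbrev Wd (X : Type) := FreeSemigroup (Gx X)

namespace Wd

variable {X : Type}

/-- The one-letter word. -/
def og (g : Gx X) : Wd X := FreeSemigroup.of g

/-- The list of letters of a word. -/
def toL (w : Wd X) : List (Gx X) := w.head :: w.tail

/-- The word with a given (nonempty) list of letters. -/
def ofL (w : List (Gx X)) : Wd X := ⟨w.headI, w.tail⟩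

end Wd

/-- The generating relation `ρ_e ∪ ρ_s`. -/
def rhoBase (X : Type) : Wd X → Wd X → Prop := fun a b =>
  (∃ g : Gx X,
     (a = Wd.og Gx.gone * Wd.og g ∧ b = Wd.og g) ∨
     (a = Wd.og g * Wd.og Gx.gone ∧ b = Wd.og g) ∨
     (a = Wd.og g * Wd.og g ∧ b = Wd.og g)) ∨
  (∃ g : Gx X, 2 ≤ g.ht ∧
     ((a = Wd.og g.c * Wd.og g.l * Wd.og g ∧ b = Wd.og g) ∨
      (a = Wd.og g * Wd.og g.r * Wd.og g.c ∧ b = Wd.og g) ∨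
      (a = Wd.og g.r * Wd.og g.c * Wd.og g * Wd.og g.c * Wd.og g.l ∧
       b = Wd.og g.r * Wd.og g.c * Wd.og g.l)))

/-- The congruence `ρ`: the smallest congruence containing `ρ_e ∪ ρ_s`. -/
def rho (X : Type) : Con (Wd X) := conGen (rhoBase X)

/-- The monoid `FT¹(X) = G(X)⁺/ρ`. -/
abbrev FT1 (X : Type) := (rho X).Quotient

/-- The `ρ`-class `[u]` of a word `u`. -/
def cls {X : Type} (u : Wd X) : FT1 X := (u : FT1 X)

/-- `FT(X) = FT¹(X) ∖ {[1]}`, as a subset of `FT¹(X)`. -/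
def FTset (X : Type) : Set (FT1 X) := {a | a ≠ cls (Wd.og Gx.gone)}

section Landscapes

variable {X : Type}

/-- Landscapes (as nonempty lists of letters). -/
def IsLandL (w : List (Gx X)) : Prop :=
  w ≠ [] ∧ w.Chain' (fun a b => Gx.stepUp a b ∨ Gx.stepDown a b)

/-- Uphills. -/
def IsUphillL (w : List (Gx X)) : Prop := w ≠ [] ∧ w.Chain' Gx.stepUp

/-- Downhills. -/
def IsDownhillL (w : List (Gx X)) : Prop := w ≠ [] ∧ w.Chain' Gx.stepDown

/-- No letter is a river. -/
def RiverFreeL : List (Gx X) → Prop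
  | a :: b :: c :: t =>
      ¬(a.ht = b.ht + 1 ∧ c.ht = b.ht + 1) ∧ RiverFreeL (b :: c :: t)
  | _ => True

/-- Mountains: landscapes with endpoints `1` and no rivers. -/
def IsMountainL (w : List (Gx X)) : Prop :=
  IsLandL w ∧ w.head? = some Gx.gone ∧ w.getLast? = some Gx.gone ∧ RiverFreeL w

/-- The set `M¹(X)` of all mountains. -/
def MSet (X : Type) : Set (List (Gx X)) := {w | IsMountainL w}

/-- `u * v`: concatenation merging the repeated junction letter. -/
def mergeL (u v : List (Gx X)) : List (Gx X) := u ++ v.tail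

open Classical in
/-- The maximal initial uphill `λ_l` of a landscape. -/
noncomputable def maxUp : List (Gx X) → List (Gx X)
  | a :: b :: t => if Gx.stepUp a b then a :: maxUp (b :: t) else [a]
  | w => w

/-- The maximal final downhill `λ_r` of a landscape. -/
noncomputable def lamRL (w : List (Gx X)) : List (Gx X) := (maxUp w.reverse).reverse

/-- The peak `κ` of a mountain. -/
noncomputable def peakL (w : List (Gx X)) : Gx X := (maxUp w).getLast?.getD Gx.gone

/-- `β₁` on a letter: the mountain `λ_l(g) * λ_r(g)`. -/
def beta1g (g : Gx X) : List (Gx X) := mergeL (Gx.lamL g) (Gx.lamR g)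

/-- `β₁` on a word: `β₁(g₀) * ⋯ * β₁(g_n)`. -/
def beta1L : List (Gx X) → List (Gx X)
  | [] => []
  | [g] => beta1g g
  | g :: t => mergeL (beta1g g) (beta1L t)

/-- One uplifting of a river. -/
def UpStep (u v : List (Gx X)) : Prop :=
  ∃ (p s : List (Gx X)) (a b c : Gx X),
    u = p ++ a :: b :: c :: s ∧ a.ht = b.ht + 1 ∧ c.ht = b.ht + 1 ∧
    ((a = c ∧ v = p ++ a :: s) ∨
     (a ≠ c ∧ ∃ d : Gx X, d.1 = PreG.node c.1 b.1 a.1 ∧ v = p ++ a :: d :: c :: s))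

/-- The reflexive and transitive closure `→*` of uplifting of rivers. -/
def UpStar : List (Gx X) → List (Gx X) → Prop := Relation.ReflTransGen UpStep

open Classical in
/-- `β₂(u)`: the unique landscape with no rivers reachable from `u` by
upliftings of rivers. -/
noncomputable def beta2L (u : List (Gx X)) : List (Gx X) :=
  if h : ∃ v, UpStar u v ∧ RiverFreeL v ∧ IsLandL v then h.choose else u

/-- `β(u) = β₂(β₁(u))`. -/
noncomputable def betaL (u : List (Gx X)) : List (Gx X) := beta2L (beta1L u)

/-- The operation `⊙` on mountains: `u ⊙ v = β₂(u * v)`. -/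
noncomputable def odotL (u v : List (Gx X)) : List (Gx X) := beta2L (mergeL u v)

/-- Valleys: a downhill followed by an uphill (junction merged). -/
def IsValleyL (w : List (Gx X)) : Prop :=
  ∃ d u : List (Gx X), IsDownhillL d ∧ IsUphillL u ∧ d.getLast? = u.head? ∧
    w = mergeL d u

/-- Canyons: valleys with equal endpoints. -/
def IsCanyonL (w : List (Gx X)) : Prop := IsValleyL w ∧ w.head? = w.getLast?

/-- Gorges: canyons `w` with `w →* σ(w)`. -/
def IsGorgeL (w : List (Gx X)) : Prop :=
  IsCanyonL w ∧ ∃ a, w.head? = some a ∧ UpStar w [a]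

end Landscapes

section Green

variable {X : Type}

/-- `a ≤_R b`. -/
def leR (a b : FT1 X) : Prop := ∃ m, a = b * m

/-- `a ≤_L b`. -/
def leL (a b : FT1 X) : Prop := ∃ m, a = m * b

/-- `a ≤_J b`. -/
def leJ (a b : FT1 X) : Prop := ∃ m n, a = m * b * n

/-- The right ideal `aM`. -/
def rSet (a : FT1 X) : Set (FT1 X) := {x | ∃ m, x = a * m}

/-- The left ideal `Ma`. -/
def lSet (a : FT1 X) : Set (FT1 X) := {x | ∃ m, x = m * a}

/-- The two-sided ideal `MaM`. -/
def jSet (a : FT1 X) : Set (FT1 X) := {x | ∃ m n, x = m * a * n}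

/-- Green's relation `R`. -/
def GreenR (a b : FT1 X) : Prop := rSet a = rSet b

/-- Green's relation `L`. -/
def GreenL (a b : FT1 X) : Prop := lSet a = lSet b

/-- Green's relation `J`. -/
def GreenJ (a b : FT1 X) : Prop := jSet a = jSet b

/-- Green's relation `H = L ∩ R`. -/
def GreenH (a b : FT1 X) : Prop := GreenR a b ∧ GreenL a b

/-- Green's relation `D = L ∨ R` (join as equivalence relations). -/
def GreenD : FT1 X → FT1 X → Prop :=
  Relation.EqvGen (fun a b => GreenL a b ∨ GreenR a b)

/-- The natural partial order on a regular semigroup: `s ≤ t` iff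
`s = et = tf` for some idempotents `e`, `f`. -/
def natLe (s t : FT1 X) : Prop :=
  ∃ e f : FT1 X, e * e = e ∧ f * f = f ∧ s = e * t ∧ s = t * f

end Green

/-- The sandwich set `S(e, f)`. -/
def sandwich {S : Type*} [Mul S] (e f : S) : Set S :=
  {h | h * h = h ∧ f * h = h ∧ h * e = h ∧ e * h * f = e * f}

/-- Skeleton mappings `φ : G(X) → E(S¹)`. -/
def IsSkeletonMap {X : Type} {S : Type} [Semigroup S] (φ : Gx X → WithOne S) : Prop :=
  (Function.Injective fun x : X => φ (Gx.ofX x)) ∧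
  (∀ x : X, ∃ s : S, s * s = s ∧ φ (Gx.ofX x) = (s : WithOne S)) ∧
  (∀ g : Gx X, φ g * φ g = φ g) ∧
  (∀ g : Gx X, g.ht = 1 → φ Gx.gone * φ g = φ g ∧ φ g * φ Gx.gone = φ g) ∧
  (∀ g : Gx X, 2 ≤ g.ht → φ g ∈ sandwich (φ g.r * φ g.c) (φ g.c * φ g.l))

namespace FTAux

open Gx Wd List

variable {X : Type}

/-! ### Basic facts about `Gx` -/

theorem ht_gone : (Gx.gone : Gx X).ht = 0 := rfl

theorem eq_gone_of_ht_eq_zero {g : Gx X} (h : g.ht = 0) : g = Gx.gone := by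
  obtain ⟨g0, hg⟩ := g
  cases hg with
  | one => rfl
  | base x => simp [Gx.ht, PreG.ht] at h
  | node hl hc hr h1 h2 h3 h4 h5 h6 =>
      simp only [Gx.ht, PreG.ht] at h; omega

theorem low_facts {g : Gx X} (h : g.ht ≤ 1) :
    g.l = Gx.gone ∧ g.r = Gx.gone ∧ g.c = g := by
  obtain ⟨g0, hg⟩ := g
  cases hg with
  | one => exact ⟨rfl, rfl, rfl⟩
  | base x =>
      refine ⟨?_, ?_, ?_⟩ <;> apply Subtype.ext <;> rfl
  | node hl hc hr h1 h2 h3 h4 h5 h6 =>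
      exfalso; simp only [Gx.ht, PreG.ht] at h; omega

theorem node_facts {g : Gx X} (h : 2 ≤ g.ht) :
    g.c.ht + 1 = g.l.ht ∧ g.l.ht + 1 = g.ht ∧ g.r.ht + 1 = g.ht ∧
    (g.c = g.l.l ∨ g.c = g.l.r) ∧ (g.c = g.r.l ∨ g.c = g.r.r) := by
  obtain ⟨g0, hg⟩ := g
  cases hg with
  | one => simp [Gx.ht, PreG.ht] at h
  | base x => simp [Gx.ht, PreG.ht] at h
  | node hl hc hr h1 h2 h3 h4 h5 h6 =>
      rename_i l c r
      refine ⟨?_, ?_, ?_, ?_, ?_⟩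
      · simpa [Gx.ht, Gx.c, Gx.l, PreG.ht, PreG.center, PreG.left] using h3
      · simp [Gx.ht, Gx.l, PreG.ht, PreG.left]
      · simp only [Gx.ht, Gx.r, PreG.ht, PreG.right]; omega
      · rcases h5 with h5 | h5
        · exact Or.inl (Subtype.ext h5)
        · exact Or.inr (Subtype.ext h5)
      · rcases h6 with h6 | h6
        · exact Or.inl (Subtype.ext h6)
        · exact Or.inr (Subtype.ext h6)

theorem ht_c_add_two {g : Gx X} (h : 2 ≤ g.ht) : g.c.ht + 2 = g.ht := by
  obtain ⟨h1, h2, -⟩ := node_facts h; omega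

/-- node construction -/
def mk2 (a b c : Gx X) (hne : c ≠ a) (hb1 : b = a.l ∨ b = a.r)
    (hb2 : b = c.l ∨ b = c.r) (h1 : b.ht + 1 = a.ht) (h2 : b.ht + 1 = c.ht) :
    Gx X :=
  ⟨PreG.node c.1 b.1 a.1, by
    refine PreG.IsG.node c.2 b.2 a.2 ?_ ?_ ?_ ?_ ?_ ?_
    · show 1 ≤ (c : Gx X).ht; omega
    · show (c : Gx X).ht = (a : Gx X).ht; omega
    · show (b : Gx X).ht + 1 = (c : Gx X).ht; omega
    · intro hh; exact hne (Subtype.ext hh)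
    · rcases hb2 with h | h
      · exact Or.inl (congrArg Subtype.val h)
      · exact Or.inr (congrArg Subtype.val h)
    · rcases hb1 with h | h
      · exact Or.inl (congrArg Subtype.val h)
      · exact Or.inr (congrArg Subtype.val h)⟩

@[simp] theorem mk2_l (a b c : Gx X) (hne hb1 hb2 h1 h2) :
    (mk2 a b c hne hb1 hb2 h1 h2).l = c := Subtype.ext rfl

@[simp] theorem mk2_c (a b c : Gx X) (hne hb1 hb2 h1 h2) :
    (mk2 a b c hne hb1 hb2 h1 h2).c = b := Subtype.ext rfl

@[simp] theorem mk2_r (a b c : Gx X) (hne hb1 hb2 h1 h2) :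
    (mk2 a b c hne hb1 hb2 h1 h2).r = a := Subtype.ext rfl

theorem mk2_ht (a b c : Gx X) (hne hb1 hb2 h1 h2) :
    (mk2 a b c hne hb1 hb2 h1 h2).ht = b.ht + 2 := by
  show (c : Gx X).1.ht + 1 = b.ht + 2
  have : (c : Gx X).1.ht = c.ht := rfl
  omega

theorem mk2_ht2 (a b c : Gx X) (hne hb1 hb2 h1 h2) :
    2 ≤ (mk2 a b c hne hb1 hb2 h1 h2).ht := by rw [mk2_ht]; omega

/-! ### The class map and basic relations -/

/-- `[g]`, the class of a single letter. -/
def cg (g : Gx X) : FT1 X := cls (Wd.og g)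

theorem cls_mul (u v : Wd X) : cls (u * v) = cls u * cls v := rfl

theorem cls_of_base {a b : Wd X} (h : rhoBase X a b) : cls a = cls b :=
  (Con.eq _).mpr (ConGen.Rel.of _ _ h)

theorem cg_sq (g : Gx X) : cg g * cg g = cg g :=
  cls_of_base (Or.inl ⟨g, Or.inr (Or.inr ⟨rfl, rfl⟩)⟩)

theorem one_mul_word (u : Wd X) :
    cls (Wd.og Gx.gone * u) = cls u := by
  induction u using FreeSemigroup.recOnMul with
  | ih1 g => exact cls_of_base (Or.inl ⟨g, Or.inl ⟨rfl, rfl⟩⟩)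
  | ih2 u v hu hv =>
      rw [← mul_assoc, cls_mul, hu, ← cls_mul]

theorem word_mul_one (u : Wd X) :
    cls (u * Wd.og Gx.gone) = cls u := by
  induction u using FreeSemigroup.recOnMul with
  | ih1 g => exact cls_of_base (Or.inl ⟨g, Or.inr (Or.inl ⟨rfl, rfl⟩)⟩)
  | ih2 u v hu hv => rw [mul_assoc, cls_mul, hv, ← cls_mul]

instance : Monoid (FT1 X) :=
  { (inferInstance : Semigroup (FT1 X)) with
    one := cls (Wd.og Gx.gone)
    one_mul := fun a => Con.induction_on a fun w => one_mul_word w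
    mul_one := fun a => Con.induction_on a fun w => word_mul_one w }

theorem cg_gone : (cg Gx.gone : FT1 X) = 1 := rfl

end FTAux
namespace FTAux

open Gx Wd List

variable {X : Type}

/-! ### Rewriting helpers -/

section Calc
variable {M : Type*} [Semigroup M] {a b c d e f : M}

theorem t2 (h : a * b = c) (x : M) : a * (b * x) = c * x := by
  rw [← mul_assoc, h]

theorem t3 (h : a * b * c = d) (x : M) : a * (b * (c * x)) = d * x := by
  rw [← mul_assoc, ← mul_assoc, h]

theorem t4 (h : a * b * (c * d) = e) (x : M) :
    a * (b * (c * (d * x))) = e * x := by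
  rw [← h]; simp only [mul_assoc]

theorem e3 (h : a * b * c = d) : a * (b * c) = d := by rw [← mul_assoc, h]

theorem uplift_core {A B C D : M} (hBB : B * B = B) (h1 : B * C * D = D)
    (h2 : D * A * B = D) (h3 : A * B * D * B * C = A * B * C) :
    ∀ x, A * (B * (C * x)) = A * (D * (C * x)) := by
  have hBBx := t2 hBB
  have h1x := t3 h1
  have h2x := t3 h2
  have h3' : A * (B * (D * (B * C))) = A * (B * C) := by
    rw [← mul_assoc, ← mul_assoc, ← mul_assoc, h3, mul_assoc]
  have key : A * (B * C) = A * (B * (C * (D * (A * (B * C))))) := by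
    calc A * (B * C) = A * (B * (D * (B * C))) := h3'.symm
      _ = A * (B * (B * (C * (D * (B * C))))) := by rw [h1x (B * C)]
      _ = A * (B * (C * (D * (B * C)))) := by rw [hBBx (C * (D * (B * C)))]
      _ = A * (B * (C * (D * (A * (B * (B * C)))))) := by rw [h2x (B * C)]
      _ = A * (B * (C * (D * (A * (B * C))))) := by rw [hBBx C]
  have key2 : A * (D * C) = A * (B * (C * (D * (A * (B * C))))) := by
    calc A * (D * C) = A * (D * (A * (B * C))) := by rw [h2x C]
      _ = A * (B * (C * (D * (A * (B * C))))) := by rw [h1x (A * (B * C))]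
  have base : A * (B * C) = A * (D * C) := key.trans key2.symm
  have base' : A * B * C = A * D * C := by
    rw [mul_assoc, mul_assoc]; exact base
  intro x
  calc A * (B * (C * x)) = A * B * C * x := by simp only [mul_assoc]
    _ = A * D * C * x := by rw [base']
    _ = A * (D * (C * x)) := by simp only [mul_assoc]

end Calc

/-! ### The defining relations, unconditionally -/

theorem relA (g : Gx X) : cg g.c * cg g.l * cg g = cg g := by
  rcases le_or_gt 2 g.ht with h | h
  · exact cls_of_base (Or.inr ⟨g, h, Or.inl ⟨rfl, rfl⟩⟩)
  · obtain ⟨hl, hr, hc⟩ := low_facts (show g.ht ≤ 1 by omega)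
    rw [hl, hc, cg_gone, mul_one, cg_sq]

theorem relB (g : Gx X) : cg g * cg g.r * cg g.c = cg g := by
  rcases le_or_gt 2 g.ht with h | h
  · exact cls_of_base (Or.inr ⟨g, h, Or.inr (Or.inl ⟨rfl, rfl⟩)⟩)
  · obtain ⟨hl, hr, hc⟩ := low_facts (show g.ht ≤ 1 by omega)
    rw [hr, hc, cg_gone, mul_one, cg_sq]

theorem relC (g : Gx X) :
    cg g.r * cg g.c * cg g * cg g.c * cg g.l = cg g.r * cg g.c * cg g.l := by
  rcases le_or_gt 2 g.ht with h | h
  · exact cls_of_base (Or.inr ⟨g, h, Or.inr (Or.inr ⟨rfl, rfl⟩)⟩)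
  · obtain ⟨hl, hr, hc⟩ := low_facts (show g.ht ≤ 1 by omega)
    rw [hl, hr, hc, cg_gone]; simp only [one_mul, mul_one, cg_sq]

/-- right-assoc versions -/
theorem relA' (g : Gx X) : cg g.c * (cg g.l * cg g) = cg g := e3 (relA g)

theorem relB' (g : Gx X) : cg g * (cg g.r * cg g.c) = cg g := e3 (relB g)

theorem relKey (g : Gx X) :
    cg g * (cg g.r * (cg g.c * (cg g.l * cg g))) = cg g := by
  calc cg g * (cg g.r * (cg g.c * (cg g.l * cg g)))
      = cg g * (cg g.r * (cg g.c * (cg g.c * (cg g.l * cg g)))) := by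
        rw [t2 (cg_sq g.c)]
    _ = cg g * (cg g.r * (cg g.c * cg g)) := by rw [relA' g]
    _ = (cg g * (cg g.r * cg g.c)) * cg g := by
        rw [mul_assoc, mul_assoc]
    _ = cg g * cg g := by rw [relB' g]
    _ = cg g := cg_sq g

theorem stepAbsorb {g b : Gx X} (hb : b = g.l ∨ b = g.r) :
    cg g * (cg b * cg g) = cg g := by
  rcases hb with rfl | rfl
  · have h2 : (cg g * (cg g.r * cg g.c)) * (cg g.l * cg g) = cg g := by
      rw [mul_assoc, mul_assoc]; exact relKey g
    rw [relB' g] at h2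
    exact h2
  · calc cg g * (cg g.r * cg g)
        = cg g * (cg g.r * (cg g.c * (cg g.l * cg g))) := by rw [relA' g]
      _ = cg g := relKey g

theorem stepAbsorb' {g b : Gx X} (hb : b = g.l ∨ b = g.r) (x : FT1 X) :
    cg g * (cg b * (cg g * x)) = cg g * x := by
  rw [← mul_assoc, ← mul_assoc, mul_assoc (cg g), stepAbsorb hb]

/-! ### Products of lists of letters -/

/-- product of the classes of a list of letters -/
def P (l : List (Gx X)) : FT1 X := (l.map cg).prod

@[simp] theorem P_nil : P ([] : List (Gx X)) = 1 := rfl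

@[simp] theorem P_cons (a : Gx X) (l : List (Gx X)) :
    P (a :: l) = cg a * P l := by simp [P]

theorem P_append (l l' : List (Gx X)) : P (l ++ l') = P l * P l' := by
  simp [P]

@[simp] theorem P_singleton (a : Gx X) : P [a] = cg a := by simp [P]

theorem exists_word : ∀ (a : Gx X) (l : List (Gx X)),
    ∃ u : Wd X, cls u = P (a :: l) := by
  intro a l
  induction l generalizing a with
  | nil => exact ⟨Wd.og a, by simp [cg]⟩
  | cons b l ih =>
      obtain ⟨u, hu⟩ := ih b
      exact ⟨Wd.og a * u, by rw [cls_mul, hu, P_cons]; rfl⟩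

end FTAux
namespace FTAux

open Gx Wd List

variable {X : Type}

/-! ### Landscapes -/

/-- an upward step -/
def UpS (a b : Gx X) : Prop := a.ht + 1 = b.ht ∧ (a = b.l ∨ a = b.r)

/-- a step (upward or downward) -/
def Stp (a b : Gx X) : Prop := UpS a b ∨ UpS b a

theorem upHill : ∀ (n : ℕ) (g : Gx X), g.ht ≤ n →
    ∃ A : List (Gx X), List.IsChain UpS (A ++ [g]) ∧
      (A ++ [g]).head? = some Gx.gone ∧ P (A ++ [g]) = cg g := by
  intro n
  induction n with
  | zero =>
      intro g hg
      have : g = Gx.gone := eq_gone_of_ht_eq_zero (Nat.le_zero.mp hg)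
      subst this
      exact ⟨[], by simp, rfl, by simp⟩
  | succ n ih =>
      intro g hg
      rcases Nat.lt_or_ge g.ht 2 with h2 | h2
      · rcases Nat.lt_or_ge g.ht 1 with h1 | h1
        · have : g = Gx.gone := eq_gone_of_ht_eq_zero (by omega)
          subst this
          exact ⟨[], by simp, rfl, by simp⟩
        · have hg1 : g.ht = 1 := by omega
          obtain ⟨hl, hr, hc⟩ := low_facts (show g.ht ≤ 1 by omega)
          refine ⟨[Gx.gone], ?_, rfl, ?_⟩
          · refine List.isChain_cons_cons.mpr ⟨⟨?_, Or.inl hl.symm⟩, by simp⟩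
            rw [ht_gone, hg1]
          · show P [Gx.gone, g] = cg g
            rw [show ([Gx.gone, g] : List (Gx X)) = [Gx.gone] ++ [g] from rfl,
              P_append, P_singleton, P_singleton, cg_gone, one_mul]
      · obtain ⟨hcl, hlh, hrh, hcll, hcrr⟩ := node_facts h2
        have hch : g.c.ht ≤ n := by
          have := ht_c_add_two h2; omega
        obtain ⟨A, hchain, hhead, hP⟩ := ih g.c hch
        refine ⟨A ++ [g.c] ++ [g.l], ?_, ?_, ?_⟩
        · rw [List.append_assoc (A ++ [g.c]), List.isChain_append]
          refine ⟨hchain, ?_, ?_⟩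
          · exact List.isChain_cons_cons.mpr ⟨⟨by omega, Or.inl rfl⟩, by simp⟩
          · intro x hx y hy
            rw [List.getLast?_append_of_ne_nil A (show [g.c] ≠ [] by simp)] at hx
            simp only [List.getLast?_singleton, Option.mem_def, Option.some.injEq] at hx
            simp only [List.singleton_append, List.head?_cons, Option.mem_def,
              Option.some.injEq] at hy
            subst hx; subst hy
            exact ⟨by omega, hcll⟩
        · rw [List.head?_append_of_ne_nil _ (show A ++ [g.c] ++ [g.l] ≠ [] by simp),
            List.head?_append_of_ne_nil _ (show A ++ [g.c] ≠ [] by simp)]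
          exact hhead
        · simp only [P_append, P_singleton, hP]
          exact relA g

theorem downHill : ∀ (n : ℕ) (g : Gx X), g.ht ≤ n →
    ∃ B : List (Gx X), List.IsChain (flip UpS) (g :: B) ∧
      (g :: B).getLast? = some Gx.gone ∧ P (g :: B) = cg g := by
  intro n
  induction n with
  | zero =>
      intro g hg
      have : g = Gx.gone := eq_gone_of_ht_eq_zero (Nat.le_zero.mp hg)
      subst this
      exact ⟨[], by simp, rfl, by simp⟩
  | succ n ih =>
      intro g hg
      rcases Nat.lt_or_ge g.ht 2 with h2 | h2
      · rcases Nat.lt_or_ge g.ht 1 with h1 | h1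
        · have : g = Gx.gone := eq_gone_of_ht_eq_zero (by omega)
          subst this
          exact ⟨[], by simp, rfl, by simp⟩
        · have hg1 : g.ht = 1 := by omega
          obtain ⟨hl, hr, hc⟩ := low_facts (show g.ht ≤ 1 by omega)
          refine ⟨[Gx.gone], ?_, rfl, ?_⟩
          · refine List.isChain_cons_cons.mpr ⟨⟨?_, Or.inl hl.symm⟩, by simp⟩
            rw [ht_gone, hg1]
          · show P [g, Gx.gone] = cg g
            rw [show ([g, Gx.gone] : List (Gx X)) = [g] ++ [Gx.gone] from rfl,
              P_append, P_singleton, P_singleton, cg_gone, mul_one]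
      · obtain ⟨hcl, hlh, hrh, hcll, hcrr⟩ := node_facts h2
        have hch : g.c.ht ≤ n := by
          have := ht_c_add_two h2; omega
        obtain ⟨B, hchain, hlast, hP⟩ := ih g.c hch
        refine ⟨g.r :: g.c :: B, ?_, ?_, ?_⟩
        · refine List.isChain_cons_cons.mpr ⟨⟨by omega, Or.inr rfl⟩, ?_⟩
          exact List.isChain_cons_cons.mpr ⟨⟨by omega, hcrr⟩, hchain⟩
        · show (g :: g.r :: (g.c :: B)).getLast? = some Gx.gone
          rw [List.getLast?_cons_cons, List.getLast?_cons_cons]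
          exact hlast
        · rw [P_cons, P_cons, hP, relB' g]

theorem letterMountain (g : Gx X) :
    ∃ m : List (Gx X), m ≠ [] ∧ List.IsChain Stp m ∧
      m.head? = some Gx.gone ∧ m.getLast? = some Gx.gone ∧ P m = cg g := by
  obtain ⟨A, hAchain, hAhead, hAP⟩ := upHill g.ht g le_rfl
  obtain ⟨B, hBchain, hBlast, hBP⟩ := downHill g.ht g le_rfl
  refine ⟨A ++ g :: B, by simp, ?_, ?_, ?_, ?_⟩
  · rw [List.isChain_append]
    refine ⟨(List.isChain_append.mp hAchain).1.imp fun a b h => Or.inl h,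
      hBchain.imp fun a b h => Or.inr h, ?_⟩
    intro x hx y hy
    simp only [List.head?_cons, Option.mem_def, Option.some.injEq] at hy
    subst hy
    have := (List.isChain_append.mp hAchain).2.2 x hx g (by simp)
    exact Or.inl this
  · cases A with
    | nil =>
        simp only [List.nil_append] at hAhead ⊢
        simpa using hAhead
    | cons a A' =>
        simp only [List.cons_append, List.head?_cons] at hAhead ⊢
        exact hAhead
  · rw [List.getLast?_append_of_ne_nil _ (by simp)]
    exact hBlast
  · have hA' : P A * cg g = cg g := by
      have h := hAP; rw [P_append, P_singleton] at h; exact h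
    have hB' : cg g * P B = cg g := by rw [← P_cons]; exact hBP
    rw [P_append, P_cons, hB', hA']

theorem wordMountain (u : Wd X) :
    ∃ m : List (Gx X), m ≠ [] ∧ List.IsChain Stp m ∧
      m.head? = some Gx.gone ∧ m.getLast? = some Gx.gone ∧ P m = cls u := by
  induction u using FreeSemigroup.recOnMul with
  | ih1 g => exact letterMountain g
  | ih2 u v hu hv =>
      obtain ⟨m₁, hm₁ne, hm₁c, hm₁h, hm₁l, hm₁P⟩ := hu
      obtain ⟨m₂, hm₂ne, hm₂c, hm₂h, hm₂l, hm₂P⟩ := hv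
      obtain ⟨t, rfl⟩ : ∃ t, m₂ = Gx.gone :: t := by
        cases m₂ with
        | nil => exact absurd rfl hm₂ne
        | cons a t =>
            simp only [List.head?_cons, Option.some.injEq] at hm₂h
            exact ⟨t, by rw [hm₂h]⟩
      cases t with
      | nil =>
          refine ⟨m₁, hm₁ne, hm₁c, hm₁h, hm₁l, ?_⟩
          have hv1 : cls v = 1 := by rw [← hm₂P]; simp [cg_gone]
          rw [cls_mul, hv1, mul_one, hm₁P]
      | cons b t' =>
          refine ⟨m₁ ++ b :: t', by simp, ?_, ?_, ?_, ?_⟩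
          · rw [List.isChain_append]
            exact ⟨hm₁c, hm₂c.tail, fun x hx y hy => by
              rw [hm₁l] at hx
              simp only [Option.mem_def, Option.some.injEq] at hx
              subst hx
              simp only [List.head?_cons, Option.mem_def, Option.some.injEq] at hy
              subst hy
              exact hm₂c.rel_head⟩
          · rw [List.head?_append_of_ne_nil _ hm₁ne]; exact hm₁h
          · rw [List.getLast?_append_of_ne_nil _ (by simp)]
            simpa using hm₂l
          · rw [P_append, hm₁P, cls_mul, ← hm₂P]
            simp [cg_gone]

end FTAux
namespace FTAux

open Gx Wd List

variable {X : Type}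

/-! ### Height bounds -/

theorem ht_step {a b : Gx X} (h : Stp a b) : b.ht ≤ a.ht + 1 := by
  rcases h with ⟨h, -⟩ | ⟨h, -⟩ <;> omega

theorem head?_append_cons (A : List (Gx X)) (g : Gx X) (B B' : List (Gx X)) :
    (A ++ g :: B).head? = (A ++ g :: B').head? := by
  cases A <;> simp

theorem ht_chain_le : ∀ (pre : List (Gx X)) (x b : Gx X) (post l : List (Gx X)),
    List.IsChain Stp (x :: l) → l = pre ++ b :: post →
    b.ht ≤ x.ht + pre.length + 1 := by
  intro pre
  induction pre with
  | nil =>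
      intro x b post l hc hl
      subst hl
      have h := (List.isChain_cons_cons.mp hc).1
      have := ht_step h
      simpa using this
  | cons y pre ih =>
      intro x b post l hc hl
      subst hl
      have h2 : List.IsChain Stp (y :: (pre ++ b :: post)) := hc.tail
      have hs := ht_step (List.isChain_cons_cons.mp hc).1
      have := ih y b post _ h2 rfl
      simp only [List.length_cons]
      omega

theorem ht_mem_le {m : List (Gx X)} (hc : List.IsChain Stp m)
    (hh : m.head? = some Gx.gone) :
    ∀ pre (b : Gx X) post, m = pre ++ b :: post → b.ht ≤ pre.length := by
  intro pre b post heq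
  cases pre with
  | nil =>
      subst heq
      simp only [List.nil_append, List.head?_cons, Option.some.injEq] at hh
      subst hh
      simp [ht_gone]
  | cons p0 pre' =>
      subst heq
      simp only [List.cons_append, List.head?_cons, Option.some.injEq] at hh
      subst hh
      have := ht_chain_le pre' Gx.gone b post _ hc rfl
      simp only [ht_gone] at this
      simpa using this

/-! ### Unimodal landscapes -/

/-- unimodal landscapes: an uphill followed by a downhill -/
def Uni (w : List (Gx X)) : Prop :=
  ∃ A g B, w = A ++ g :: B ∧ List.IsChain UpS (A ++ [g]) ∧
    List.IsChain (flip UpS) (g :: B)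

theorem uni_or_river : ∀ w : List (Gx X), List.IsChain Stp w → w ≠ [] →
    Uni w ∨ ∃ p a b c s, w = p ++ a :: b :: c :: s ∧ UpS b a ∧ UpS b c := by
  intro w
  induction w with
  | nil => intro _ h; exact absurd rfl h
  | cons x w ihw =>
    intro hc _
    cases w with
    | nil => exact Or.inl ⟨[], x, [], rfl, by simp, by simp⟩
    | cons y t =>
        rcases ihw hc.tail (by simp) with huni | hriv
        · obtain ⟨A, g, B, heq, hup, hdn⟩ := huni
          rcases (List.isChain_cons_cons.mp hc).1 with hxy | hyx
          · refine Or.inl ⟨x :: A, g, B, by rw [heq, List.cons_append], ?_, hdn⟩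
            refine List.isChain_cons.mpr ⟨?_, hup⟩
            intro z hz
            have hh : (A ++ [g]).head? = some y := by
              rw [head?_append_cons A g [] B, ← heq]
              rfl
            simp only [List.append_eq] at hz
            rw [hh] at hz
            obtain rfl : y = z := by simpa using hz
            exact hxy
          · cases A with
            | nil =>
                simp only [List.nil_append, List.cons.injEq] at heq
                obtain ⟨rfl, rfl⟩ := heq
                refine Or.inl ⟨[], x, y :: t, rfl, by simp, ?_⟩
                exact List.isChain_cons_cons.mpr ⟨hyx, hdn⟩
            | cons a2 A2 =>
                simp only [List.cons_append, List.cons.injEq] at heq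
                obtain ⟨rfl, ht'⟩ := heq
                obtain ⟨z, s', hzs⟩ : ∃ z s', A2 ++ g :: B = z :: s' := by
                  cases A2 <;> exact ⟨_, _, rfl⟩
                have hyz : UpS y z := by
                  have h1 : List.IsChain UpS (y :: (A2 ++ [g])) := hup
                  have hh : (A2 ++ [g]).head? = some z := by
                    rw [head?_append_cons A2 g [] B, hzs]; rfl
                  exact (List.isChain_cons.mp h1).1 z hh
                exact Or.inr ⟨[], x, y, z, s', by rw [ht', hzs]; rfl, hyx, hyz⟩
        · obtain ⟨p, a, b, c, s, heq, h1, h2⟩ := hriv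
          exact Or.inr ⟨x :: p, a, b, c, s, by rw [heq, List.cons_append], h1, h2⟩

/-! ### The measure and reduction -/

/-- termination measure -/
def Ms (w : List (Gx X)) : ℕ :=
  w.length + (w.map fun x => w.length - x.ht).sum

theorem Ms_delete (p s : List (Gx X)) (a b c : Gx X) :
    Ms (p ++ a :: s) < Ms (p ++ a :: b :: c :: s) := by
  have hlen : (p ++ a :: s).length + 2 = (p ++ a :: b :: c :: s).length := by
    simp [List.length_append]; omega
  have h1 : ((p ++ a :: s).map fun x => (p ++ a :: s).length - x.ht).sum
      ≤ ((p ++ a :: s).map fun x => (p ++ a :: b :: c :: s).length - x.ht).sum :=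
    List.sum_le_sum fun i _ => by omega
  have h2 : ((p ++ a :: s).map fun x => (p ++ a :: b :: c :: s).length - x.ht).sum
      ≤ ((p ++ a :: b :: c :: s).map fun x =>
          (p ++ a :: b :: c :: s).length - x.ht).sum := by
    simp only [List.map_append, List.sum_append, List.map_cons, List.sum_cons]
    omega
  unfold Ms
  omega

theorem Ms_uplift (p s : List (Gx X)) (a b c d : Gx X) (hd : d.ht = b.ht + 2)
    (hb : b.ht + 2 ≤ (p ++ a :: b :: c :: s).length) :
    Ms (p ++ a :: d :: c :: s) < Ms (p ++ a :: b :: c :: s) := by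
  have hlen : (p ++ a :: d :: c :: s).length = (p ++ a :: b :: c :: s).length := by
    simp [List.length_append]
  unfold Ms
  rw [hlen]
  simp only [List.map_append, List.sum_append, List.map_cons, List.sum_cons]
  omega

theorem chain_parts {R : Gx X → Gx X → Prop} {p s : List (Gx X)} {a b c : Gx X}
    (h : List.IsChain R (p ++ a :: b :: c :: s)) :
    List.IsChain R p ∧ (∀ x ∈ p.getLast?, R x a) ∧ R a b ∧ R b c ∧
      List.IsChain R (c :: s) := by
  rw [List.isChain_append] at h
  obtain ⟨h1, h2, h3⟩ := h
  exact ⟨h1, fun x hx => h3 x hx a (by simp), (List.isChain_cons_cons.mp h2).1,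
    (List.isChain_cons_cons.mp (List.isChain_cons_cons.mp h2).2).1,
    (List.isChain_cons_cons.mp (List.isChain_cons_cons.mp h2).2).2⟩

theorem reduce : ∀ (n : ℕ) (w : List (Gx X)), Ms w ≤ n → List.IsChain Stp w →
    w.head? = some Gx.gone → ∃ m, Uni m ∧ P m = P w := by
  intro n
  induction n with
  | zero =>
      intro w hm hc hh
      exfalso
      cases w with
      | nil => simp at hh
      | cons a t => unfold Ms at hm; simp at hm
  | succ n ih =>
      intro w hm hc hh
      have hne : w ≠ [] := by intro h; rw [h] at hh; simp at hh
      rcases uni_or_river w hc hne with huni | ⟨p, a, b, c, s, heq, hba, hbc⟩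
      · exact ⟨w, huni, rfl⟩
      · subst heq
        obtain ⟨hbah, hbal⟩ := hba
        obtain ⟨hbch, hbcl⟩ := hbc
        obtain ⟨hp, hj, hab, hbc', hcs⟩ := chain_parts hc
        by_cases hac : a = c
        · -- delete the valley
          have hc' : List.IsChain Stp (p ++ a :: s) := by
            rw [List.isChain_append]
            refine ⟨hp, ?_, ?_⟩
            · refine List.isChain_cons.mpr ⟨?_, (List.isChain_cons.mp hcs).2⟩
              intro z hz
              rw [hac]
              exact (List.isChain_cons.mp hcs).1 z hz
            · intro x hx y hy
              simp only [List.head?_cons, Option.mem_def, Option.some.injEq] at hy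
              exact hy ▸ hj x hx
          have hh' : (p ++ a :: s).head? = some Gx.gone := by
            rw [head?_append_cons p a s (b :: c :: s)]; exact hh
          have hms : Ms (p ++ a :: s) ≤ n := by
            have := Ms_delete p s a b c; omega
          obtain ⟨m, hmu, hmP⟩ := ih (p ++ a :: s) hms hc' hh'
          refine ⟨m, hmu, ?_⟩
          rw [hmP]
          rw [P_append, P_append, P_cons, P_cons, P_cons, P_cons]
          congr 1
          rw [← hac]
          exact (stepAbsorb' hbal (P s)).symm
        · -- uplift the river
          have hca : c ≠ a := fun h => hac h.symm
          set d := mk2 a b c hca hbal hbcl hbah hbch with hd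
          have hdht : d.ht = b.ht + 2 := mk2_ht a b c hca hbal hbcl hbah hbch
          have hdl : d.l = c := mk2_l a b c hca hbal hbcl hbah hbch
          have hdc : d.c = b := mk2_c a b c hca hbal hbcl hbah hbch
          have hdr : d.r = a := mk2_r a b c hca hbal hbcl hbah hbch
          have hc' : List.IsChain Stp (p ++ a :: d :: c :: s) := by
            rw [List.isChain_append]
            refine ⟨hp, ?_, ?_⟩
            · refine List.isChain_cons_cons.mpr ⟨Or.inl ⟨by omega, Or.inr hdr.symm⟩, ?_⟩
              exact List.isChain_cons_cons.mpr ⟨Or.inr ⟨by omega, Or.inl hdl.symm⟩, hcs⟩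
            · intro x hx y hy
              simp only [List.head?_cons, Option.mem_def, Option.some.injEq] at hy
              exact hy ▸ hj x hx
          have hh' : (p ++ a :: d :: c :: s).head? = some Gx.gone := by
            rw [head?_append_cons p a (d :: c :: s) (b :: c :: s)]; exact hh
          have hbht : b.ht ≤ p.length + 1 := by
            have := ht_mem_le hc hh (p ++ [a]) b (c :: s) (by simp)
            simpa using this
          have hms : Ms (p ++ a :: d :: c :: s) ≤ n := by
            have := Ms_uplift p s a b c d hdht (by simp [List.length_append]; omega)
            omega
          obtain ⟨m, hmu, hmP⟩ := ih (p ++ a :: d :: c :: s) hms hc' hh'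
          refine ⟨m, hmu, ?_⟩
          rw [hmP]
          rw [P_append, P_append, P_cons, P_cons, P_cons, P_cons, P_cons, P_cons]
          congr 1
          have h1 : cg b * cg c * cg d = cg d := by
            have := relA d; rwa [hdc, hdl] at this
          have h2 : cg d * cg a * cg b = cg d := by
            have := relB d; rwa [hdr, hdc] at this
          have h3 : cg a * cg b * cg d * cg b * cg c = cg a * cg b * cg c := by
            have := relC d; rwa [hdr, hdc, hdl] at this
          exact (uplift_core (cg_sq b) h1 h2 h3 (P s)).symm

end FTAux
namespace FTAux

open Gx Wd List

variable {X : Type}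

/-! ### Inverses of unimodal landscapes -/

theorem downAbsorb : ∀ (B : List (Gx X)) (g : Gx X),
    List.IsChain (flip UpS) (g :: B) → P (g :: B) * P (g :: B).reverse = cg g := by
  intro B
  induction B with
  | nil => intro g _; simpa using cg_sq g
  | cons b B' ih =>
      intro g hch
      have hgb : UpS b g := (List.isChain_cons_cons.mp hch).1
      have hrec := ih b (List.isChain_cons_cons.mp hch).2
      have hrev : (g :: b :: B').reverse = (b :: B').reverse ++ [g] := by
        simp
      rw [hrev, P_cons, P_append, P_singleton]
      calc cg g * P (b :: B') * (P (b :: B').reverse * cg g)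
          = cg g * (P (b :: B') * P (b :: B').reverse) * cg g := by
            simp only [mul_assoc]
        _ = cg g * cg b * cg g := by rw [hrec]
        _ = cg g := by rw [mul_assoc]; exact stepAbsorb hgb.2

theorem upAbsorb {A : List (Gx X)} {g : Gx X}
    (h : List.IsChain UpS (A ++ [g])) :
    P (A ++ [g]).reverse * P (A ++ [g]) = cg g := by
  have hch : List.IsChain (flip UpS) (g :: A.reverse) := by
    have : List.IsChain (flip UpS) (A ++ [g]).reverse := by
      rw [List.isChain_reverse]
      exact h.imp fun a b hab => hab
    simpa using this
  have := downAbsorb A.reverse g hch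
  rw [show (g :: A.reverse).reverse = A ++ [g] by simp] at this
  rw [show (A ++ [g]).reverse = g :: A.reverse by simp]
  exact this

theorem uniInv {m : List (Gx X)} (h : Uni m) :
    P m * P m.reverse * P m = P m := by
  obtain ⟨A, g, B, rfl, hup, hdn⟩ := h
  have hrev : (A ++ g :: B).reverse = (B.reverse ++ [g]) ++ A.reverse := by
    simp
  have hdownP : (cg g * P B) * (P B.reverse * cg g) = cg g := by
    have := downAbsorb B g hdn
    rw [P_cons, show (g :: B).reverse = B.reverse ++ [g] by simp,
      P_append, P_singleton] at this
    exact this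
  have hupP : (cg g * P A.reverse) * (P A * cg g) = cg g := by
    have := upAbsorb hup
    rw [show (A ++ [g]).reverse = g :: A.reverse by simp, P_cons,
      P_append, P_singleton] at this
    exact this
  have hd := t4 hdownP
  have hu := t4 hupP
  rw [hrev, P_append, P_append, P_append, P_cons, P_singleton]
  calc P A * (cg g * P B) * (P B.reverse * cg g * P A.reverse) * (P A * (cg g * P B))
      = P A * (cg g * (P B * (P B.reverse * (cg g * (P A.reverse * (P A * (cg g * P B))))))) := by
        simp only [mul_assoc]
    _ = P A * (cg g * (P A.reverse * (P A * (cg g * P B)))) := by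
        rw [hd (P A.reverse * (P A * (cg g * P B)))]
    _ = P A * (cg g * P B) := by rw [hu (P B)]

theorem uniRev {m : List (Gx X)} (h : Uni m) : Uni m.reverse := by
  obtain ⟨A, g, B, rfl, hup, hdn⟩ := h
  refine ⟨B.reverse, g, A.reverse, by simp, ?_, ?_⟩
  · have : List.IsChain UpS (g :: B).reverse := by
      rw [List.isChain_reverse]
      exact hdn.imp fun a b hab => hab
    simpa using this
  · have : List.IsChain (flip UpS) (A ++ [g]).reverse := by
      rw [List.isChain_reverse]
      exact hup.imp fun a b hab => hab
    simpa using this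

/-- every element of `FT1 X` is (von Neumann) regular -/
theorem ft1_regular (u : Wd X) :
    ∃ v : Wd X, cls u * cls v * cls u = cls u ∧ cls v * cls u * cls v = cls v := by
  obtain ⟨m, hne, hch, hh, hl, hP⟩ := wordMountain u
  obtain ⟨m', hm'u, hm'P⟩ := reduce (Ms m) m le_rfl hch hh
  have hm'ne : m' ≠ [] := by
    obtain ⟨A, g, B, rfl, -, -⟩ := hm'u
    simp
  have hm'P' : P m' = cls u := by rw [hm'P, hP]
  obtain ⟨a, l, hal⟩ : ∃ a l, m'.reverse = a :: l := by
    cases hrev : m'.reverse with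
    | nil => exact absurd (by simpa using hrev) hm'ne
    | cons a l => exact ⟨a, l, rfl⟩
  obtain ⟨v, hv⟩ := exists_word a l
  rw [← hal] at hv
  refine ⟨v, ?_, ?_⟩
  · rw [← hm'P', hv]
    exact uniInv hm'u
  · rw [← hm'P', hv]
    have h2 := uniInv (uniRev hm'u)
    rwa [List.reverse_reverse] at h2
end FTAux
namespace FTAux

open Gx Wd List

variable {X : Type} {S : Type} [Semigroup S]

theorem oneAbsorb (φ : Gx X → WithOne S) (hφ : IsSkeletonMap φ) :
    ∀ (n : ℕ) (g : Gx X), g.ht ≤ n →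
      φ Gx.gone * φ g = φ g ∧ φ g * φ Gx.gone = φ g := by
  obtain ⟨hinj, hbase, hidem, hone, hsand⟩ := hφ
  intro n
  induction n with
  | zero =>
      intro g hg
      have := eq_gone_of_ht_eq_zero (Nat.le_zero.mp hg)
      subst this
      exact ⟨hidem Gx.gone, hidem Gx.gone⟩
  | succ n ih =>
      intro g hg
      rcases Nat.lt_or_ge g.ht 2 with h2 | h2
      · rcases Nat.lt_or_ge g.ht 1 with h1 | h1
        · have := eq_gone_of_ht_eq_zero (show g.ht = 0 by omega)
          subst this
          exact ⟨hidem Gx.gone, hidem Gx.gone⟩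
        · exact hone g (by omega)
      · obtain ⟨hh, hfh, hhe, hehf⟩ := hsand g h2
        have hch : g.c.ht ≤ n := by have := ht_c_add_two h2; omega
        obtain ⟨hc1, hc2⟩ := ih g.c hch
        constructor
        · calc φ Gx.gone * φ g = φ Gx.gone * (φ g.c * φ g.l * φ g) := by rw [hfh]
            _ = φ Gx.gone * φ g.c * φ g.l * φ g := by simp only [mul_assoc]
            _ = φ g.c * φ g.l * φ g := by rw [hc1]
            _ = φ g := hfh
        · calc φ g * φ Gx.gone = φ g * (φ g.r * φ g.c) * φ Gx.gone := by rw [hhe]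
            _ = φ g * (φ g.r * (φ g.c * φ Gx.gone)) := by simp only [mul_assoc]
            _ = φ g * (φ g.r * φ g.c) := by rw [hc2]
            _ = φ g := hhe

theorem lift_ker (φ : Gx X → WithOne S) (hφ : IsSkeletonMap φ) :
    ∀ a b : Wd X, rho X a b →
      FreeSemigroup.lift φ a = FreeSemigroup.lift φ b := by
  have hφ' := hφ
  obtain ⟨hinj, hbaseI, hidem, honeI, hsand⟩ := hφ'
  intro a b hab
  have hab' : ConGen.Rel (rhoBase X) a b := hab
  clear hab
  induction hab' with
  | of x y h =>
      rcases h with ⟨g, hcase⟩ | ⟨g, hht, hcase⟩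
      · rcases hcase with ⟨rfl, rfl⟩ | ⟨rfl, rfl⟩ | ⟨rfl, rfl⟩
        · simp only [Wd.og, map_mul, FreeSemigroup.lift_of]
          exact (oneAbsorb φ hφ g.ht g le_rfl).1
        · simp only [Wd.og, map_mul, FreeSemigroup.lift_of]
          exact (oneAbsorb φ hφ g.ht g le_rfl).2
        · simp only [Wd.og, map_mul, FreeSemigroup.lift_of]
          exact hidem g
      · obtain ⟨hh, hfh, hhe, hehf⟩ := hsand g hht
        rcases hcase with ⟨rfl, rfl⟩ | ⟨rfl, rfl⟩ | ⟨rfl, rfl⟩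
        · simp only [Wd.og, map_mul, FreeSemigroup.lift_of]
          exact hfh
        · simp only [Wd.og, map_mul, FreeSemigroup.lift_of]
          rw [mul_assoc]; exact hhe
        · simp only [Wd.og, map_mul, FreeSemigroup.lift_of]
          have e1 : φ g.r * (φ g.c * (φ g * (φ g.c * φ g.l)))
              = φ g.r * (φ g.c * (φ g.c * φ g.l)) := by
            simpa only [mul_assoc] using hehf
          simp only [mul_assoc]
          rw [e1, t2 (hidem g.c)]
  | refl x => rfl
  | symm _ ih => exact ih.symm
  | trans _ _ ih1 ih2 => exact ih1.trans ih2
  | mul _ _ ih1 ih2 => rw [map_mul, map_mul, ih1, ih2]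

/-- the induced homomorphism -/
def phib (φ : Gx X → WithOne S) (hφ : IsSkeletonMap φ) :
    FT1 X →ₙ* WithOne S where
  toFun := fun x => Con.liftOn x (FreeSemigroup.lift φ) (lift_ker φ hφ)
  map_mul' := fun x y => Con.induction_on₂ x y fun a b => by
    rw [← Con.coe_mul]
    simp only [Con.liftOn_coe, map_mul]

theorem phib_of (φ : Gx X → WithOne S) (hφ : IsSkeletonMap φ) (g : Gx X) :
    phib φ hφ (cls (Wd.og g)) = φ g := rfl

theorem hom_ext' (ψ₁ ψ₂ : FT1 X →ₙ* WithOne S)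
    (h : ∀ g : Gx X, ψ₁ (cls (Wd.og g)) = ψ₂ (cls (Wd.og g))) : ψ₁ = ψ₂ := by
  ext x
  induction x using Con.induction_on with
  | H w =>
      induction w using FreeSemigroup.recOnMul with
      | ih1 g => exact h g
      | ih2 u v hu hv =>
          show ψ₁ ↑(FreeSemigroup.of u * v) = ψ₂ ↑(FreeSemigroup.of u * v)
          rw [Con.coe_mul, map_mul, map_mul, hu, hv]

end FTAux
theorem statement12 {X : Type} [Nonempty X] {S : Type} [Semigroup S]
    (φ : Gx X → WithOne S) (hφ : IsSkeletonMap φ) :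
    (∃! φb : FT1 X →ₙ* WithOne S, ∀ g : Gx X, φb (cls (Wd.og g)) = φ g) ∧
    (∀ φb : FT1 X →ₙ* WithOne S, (∀ g : Gx X, φb (cls (Wd.og g)) = φ g) →
      Set.range φb = (Subsemigroup.closure (Set.range φ) : Subsemigroup (WithOne S)) ∧
      (∀ a ∈ Set.range φb, ∃ b ∈ Set.range φb, a * b * a = a ∧ b * a * b = b) ∧
      (∀ a ∈ Set.range φb, φ Gx.gone * a = a ∧ a * φ Gx.gone = a)) := by
  constructor
  · exact ⟨FTAux.phib φ hφ, FTAux.phib_of φ hφ, fun ψ hψ =>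
      FTAux.hom_ext' ψ (FTAux.phib φ hφ)
        (fun g => (hψ g).trans (FTAux.phib_of φ hφ g).symm)⟩
  · intro φb hext
    have hsur : ∀ x : FT1 X, ∃ u : Wd X, x = cls u := fun x =>
      Con.induction_on x fun w => ⟨w, rfl⟩
    have hword : ∀ u : Wd X,
        φb (cls u) ∈ Subsemigroup.closure (Set.range φ) := by
      intro u
      induction u using FreeSemigroup.recOnMul with
      | ih1 g =>
          rw [show cls (FreeSemigroup.of g) = cls (Wd.og g) from rfl, hext g]
          exact Subsemigroup.subset_closure ⟨g, rfl⟩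
      | ih2 u v hu hv =>
          have h1 : cls (FreeSemigroup.of u * v)
              = cls (FreeSemigroup.of u) * cls v := rfl
          rw [h1, map_mul]
          exact Subsemigroup.mul_mem _ hu hv
    refine ⟨?_, ?_, ?_⟩
    · apply Set.eq_of_subset_of_subset
      · rintro x ⟨y, rfl⟩
        obtain ⟨u, rfl⟩ := hsur y
        exact hword u
      · set K : Subsemigroup (WithOne S) :=
          { carrier := Set.range φb
            mul_mem' := by
              rintro _ _ ⟨x, rfl⟩ ⟨y, rfl⟩
              exact ⟨x * y, map_mul φb x y⟩ } with hK
        have hsub : Set.range φ ⊆ (K : Set (WithOne S)) := by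
          rintro _ ⟨g, rfl⟩
          exact ⟨cls (Wd.og g), hext g⟩
        exact Subsemigroup.closure_le.mpr hsub
    · rintro a ⟨x, rfl⟩
      obtain ⟨u, rfl⟩ := hsur x
      obtain ⟨v, h1, h2⟩ := FTAux.ft1_regular u
      refine ⟨φb (cls v), ⟨cls v, rfl⟩, ?_, ?_⟩
      · rw [← map_mul, ← map_mul, h1]
      · rw [← map_mul, ← map_mul, h2]
    · rintro a ⟨x, rfl⟩
      constructor
      · rw [← hext Gx.gone, ← map_mul]
        congr 1
        exact one_mul x
      · rw [← hext Gx.gone, ← map_mul]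
        congr 1
        exact mul_one x
end

section
/- Let S be a semigroup, φ': X → E(S) a one-to-one mapping, and T a regular subsemigroup of S that is weakly generated by Xφ'. Then there exists a semigroup homomorphism φ̄: FT(X) → S with [x]φ̄ = xφ' for all x ∈ X whose image is exactly T. In particular, every regular semigroup weakly generated by a set X of idempotents is a homomorphic image of FT(X) under a homomorphism fixing X pointwise. -/
/-! ### Auxiliary development -/

namespace FTaux

variable {X : Type}

open Gx Wd

/-- height-0 elements are `one`. -/
theorem PreG_eq_one {p : PreG X} (h : p.IsG) (h0 : p.ht = 0) : p = PreG.one := by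
  cases h with
  | one => rfl
  | base x => simp [PreG.ht] at h0
  | node hl hc hr h1 h2 h3 h4 h5 h6 => simp [PreG.ht] at h0

theorem eq_gone {g : Gx X} (h0 : g.ht = 0) : g = Gx.gone :=
  Subtype.ext (PreG_eq_one g.2 h0)

theorem ht_l_add {g : Gx X} (h : 1 ≤ g.ht) : g.l.ht + 1 = g.ht := by
  obtain ⟨p, hp⟩ := g
  cases hp with
  | one => simp [Gx.ht, PreG.ht] at h
  | base x => simp [Gx.l, Gx.ht, PreG.left, PreG.ht]
  | node hl hc hr h1 h2 h3 h4 h5 h6 => simp [Gx.l, Gx.ht, PreG.left, PreG.ht]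

theorem ht_r_add {g : Gx X} (h : 1 ≤ g.ht) : g.r.ht + 1 = g.ht := by
  obtain ⟨p, hp⟩ := g
  cases hp with
  | one => simp [Gx.ht, PreG.ht] at h
  | base x => simp [Gx.r, Gx.ht, PreG.right, PreG.ht]
  | node hl hc hr h1 h2 h3 h4 h5 h6 =>
      simp only [Gx.r, Gx.ht, PreG.right, PreG.ht]
      omega

theorem ht_c_add {g : Gx X} (h : 2 ≤ g.ht) : g.c.ht + 2 = g.ht := by
  obtain ⟨p, hp⟩ := g
  cases hp with
  | one => simp [Gx.ht, PreG.ht] at h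
  | base x => simp [Gx.ht, PreG.ht] at h
  | node hl hc hr h1 h2 h3 h4 h5 h6 =>
      simp only [Gx.c, Gx.ht, PreG.center, PreG.ht] at *
      omega

theorem ht_l_le (g : Gx X) : g.l.ht ≤ g.ht := by
  obtain ⟨p, hp⟩ := g
  cases hp with
  | one => simp [Gx.l, Gx.ht, PreG.left, PreG.ht]
  | base x => simp [Gx.l, Gx.ht, PreG.left, PreG.ht]
  | node hl hc hr h1 h2 h3 h4 h5 h6 => simp [Gx.l, Gx.ht, PreG.left, PreG.ht]

theorem ht_r_le (g : Gx X) : g.r.ht ≤ g.ht := by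
  obtain ⟨p, hp⟩ := g
  cases hp with
  | one => simp [Gx.r, Gx.ht, PreG.right, PreG.ht]
  | base x => simp [Gx.r, Gx.ht, PreG.right, PreG.ht]
  | node hl hc hr h1 h2 h3 h4 h5 h6 =>
      simp only [Gx.r, Gx.ht, PreG.right, PreG.ht]
      omega

theorem c_mem_l {g : Gx X} (h : 2 ≤ g.ht) : g.c = g.l.l ∨ g.c = g.l.r := by
  obtain ⟨p, hp⟩ := g
  cases hp with
  | one => simp [Gx.ht, PreG.ht] at h
  | base x => simp [Gx.ht, PreG.ht] at h
  | node hl hc hr h1 h2 h3 h4 h5 h6 =>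
      rcases h5 with h5 | h5
      · exact Or.inl (Subtype.ext h5)
      · exact Or.inr (Subtype.ext h5)

theorem c_mem_r {g : Gx X} (h : 2 ≤ g.ht) : g.c = g.r.l ∨ g.c = g.r.r := by
  obtain ⟨p, hp⟩ := g
  cases hp with
  | one => simp [Gx.ht, PreG.ht] at h
  | base x => simp [Gx.ht, PreG.ht] at h
  | node hl hc hr h1 h2 h3 h4 h5 h6 =>
      rcases h6 with h6 | h6
      · exact Or.inl (Subtype.ext h6)
      · exact Or.inr (Subtype.ext h6)

theorem l_eq_gone {g : Gx X} (h : g.ht ≤ 1) : g.l = Gx.gone := by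
  obtain ⟨p, hp⟩ := g
  cases hp with
  | one => rfl
  | base x => rfl
  | node hl hc hr h1 h2 h3 h4 h5 h6 => simp [Gx.ht, PreG.ht] at h; omega

theorem r_eq_gone {g : Gx X} (h : g.ht ≤ 1) : g.r = Gx.gone := by
  obtain ⟨p, hp⟩ := g
  cases hp with
  | one => rfl
  | base x => rfl
  | node hl hc hr h1 h2 h3 h4 h5 h6 => simp [Gx.ht, PreG.ht] at h; omega

@[simp] theorem gone_l : (Gx.gone : Gx X).l = Gx.gone := rfl
@[simp] theorem gone_r : (Gx.gone : Gx X).r = Gx.gone := rfl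
@[simp] theorem gone_ht : (Gx.gone : Gx X).ht = 0 := rfl

theorem stepUp_ht {a b : Gx X} (h : Gx.stepUp a b) : b.ht ≤ a.ht + 1 := by
  rcases h with h | h
  · subst h; have := ht_l_le b; rcases Nat.eq_zero_or_pos b.ht with h0 | h0
    · omega
    · have := ht_l_add (g := b) h0; omega
  · subst h; rcases Nat.eq_zero_or_pos b.ht with h0 | h0
    · omega
    · have := ht_r_add (g := b) h0; omega

theorem stepDown_ht {a b : Gx X} (h : Gx.stepDown a b) : b.ht ≤ a.ht + 1 := by
  rcases h with h | h
  · subst h; have := ht_l_le a; omega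
  · subst h; have := ht_r_le a; omega

/-- heights of a `stepUp`-predecessor. -/
theorem stepUp_ht_eq {a b : Gx X} (h : Gx.stepUp a b) (hb : 1 ≤ b.ht) :
    a.ht + 1 = b.ht := by
  rcases h with h | h
  · subst h; exact ht_l_add hb
  · subst h; exact ht_r_add hb

theorem stepDown_ht_eq {a b : Gx X} (h : Gx.stepDown a b) (ha : 1 ≤ a.ht) :
    b.ht + 1 = a.ht := by
  rcases h with h | h
  · subst h; exact ht_l_add ha
  · subst h; exact ht_r_add ha

theorem stepUp_gone {b : Gx X} (h : Gx.stepUp Gx.gone b) (hb : b.ht = 0) : b = Gx.gone :=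
  eq_gone hb

theorem stepDown_eq_gone {a b : Gx X} (h : Gx.stepDown a b) (ha : a.ht = 0) : b = Gx.gone := by
  have : a = Gx.gone := eq_gone ha
  subst this
  rcases h with h | h <;> simp [h]

theorem stepUp_eq_gone {a b : Gx X} (h : Gx.stepUp a b) (hb : b.ht = 0) : a = Gx.gone := by
  have : b = Gx.gone := eq_gone hb
  subst this
  rcases h with h | h <;> simp [h]

end FTaux
namespace FTaux

variable {X : Type}

open Gx Wd

/-- A convenient name for the class of a single letter. -/
def ell (g : Gx X) : FT1 X := cls (Wd.og g)

theorem cls_eq_of_rho {u v : Wd X} (h : rho X u v) : cls u = cls v := (Con.eq _).mpr h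

theorem cls_eq_of_base {u v : Wd X} (h : rhoBase X u v) : cls u = cls v :=
  cls_eq_of_rho (ConGen.Rel.of _ _ h)

theorem cls_mul (u v : Wd X) : cls (u * v) = cls u * cls v := rfl

theorem ell_idem (g : Gx X) : ell g * ell g = ell g := by
  have := cls_eq_of_base (X := X) (Or.inl ⟨g, Or.inr (Or.inr ⟨rfl, rfl⟩)⟩)
  rw [cls_mul] at this
  exact this

theorem gone_mul_ell (g : Gx X) : ell (Gx.gone) * ell g = ell g := by
  have := cls_eq_of_base (X := X) (Or.inl ⟨g, Or.inl ⟨rfl, rfl⟩⟩)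
  rw [cls_mul] at this
  exact this

theorem ell_mul_gone (g : Gx X) : ell g * ell (Gx.gone) = ell g := by
  have := cls_eq_of_base (X := X) (Or.inl ⟨g, Or.inr (Or.inl ⟨rfl, rfl⟩)⟩)
  rw [cls_mul] at this
  exact this

theorem rel_S1 {g : Gx X} (h : 2 ≤ g.ht) : ell g.c * ell g.l * ell g = ell g := by
  have := cls_eq_of_base (X := X) (Or.inr ⟨g, h, Or.inl ⟨rfl, rfl⟩⟩)
  rw [cls_mul, cls_mul] at this
  exact this

theorem rel_S2 {g : Gx X} (h : 2 ≤ g.ht) : ell g * ell g.r * ell g.c = ell g := by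
  have := cls_eq_of_base (X := X) (Or.inr ⟨g, h, Or.inr (Or.inl ⟨rfl, rfl⟩)⟩)
  rw [cls_mul, cls_mul] at this
  exact this

theorem rel_S3 {g : Gx X} (h : 2 ≤ g.ht) :
    ell g.r * ell g.c * ell g * ell g.c * ell g.l = ell g.r * ell g.c * ell g.l := by
  have := cls_eq_of_base (X := X) (Or.inr ⟨g, h, Or.inr (Or.inr ⟨rfl, rfl⟩)⟩)
  simp only [cls_mul] at this
  exact this

theorem word_one_mul (u : Wd X) : rho X (Wd.og Gx.gone * u) u := by
  induction u using FreeSemigroup.recOnMul with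
  | ih1 g => exact ConGen.Rel.of _ _ (Or.inl ⟨g, Or.inl ⟨rfl, rfl⟩⟩)
  | ih2 u v hu hv =>
      have h3 : rho X (Wd.og Gx.gone * FreeSemigroup.of u * v) (FreeSemigroup.of u * v) :=
        (rho X).mul hu ((rho X).refl v)
      rwa [mul_assoc] at h3

theorem word_mul_one (u : Wd X) : rho X (u * Wd.og Gx.gone) u := by
  induction u using FreeSemigroup.recOnMul with
  | ih1 g => exact ConGen.Rel.of _ _ (Or.inl ⟨g, Or.inr (Or.inl ⟨rfl, rfl⟩)⟩)
  | ih2 u v hu hv =>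
      have h3 : rho X (FreeSemigroup.of u * (v * Wd.og Gx.gone)) (FreeSemigroup.of u * v) :=
        (rho X).mul ((rho X).refl (FreeSemigroup.of u)) hv
      rw [mul_assoc]
      exact h3

instance : Monoid (FT1 X) :=
  { (inferInstance : Semigroup (FT1 X)) with
    one := cls (Wd.og Gx.gone)
    one_mul := fun a => Con.induction_on a fun u => by
      change cls (Wd.og Gx.gone) * cls u = cls u
      rw [← cls_mul]
      exact cls_eq_of_rho (word_one_mul u)
    mul_one := fun a => Con.induction_on a fun u => by
      change cls u * cls (Wd.og Gx.gone) = cls u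
      rw [← cls_mul]
      exact cls_eq_of_rho (word_mul_one u) }

@[simp] theorem ell_gone : ell (Gx.gone : Gx X) = 1 := rfl

/-- The product of the letters of a list, in `FT1 X`. -/
def P (l : List (Gx X)) : FT1 X := (l.map ell).prod

@[simp] theorem P_nil : P ([] : List (Gx X)) = 1 := rfl

@[simp] theorem P_cons (g : Gx X) (l : List (Gx X)) : P (g :: l) = ell g * P l := by
  simp [P]

theorem P_append (l₁ l₂ : List (Gx X)) : P (l₁ ++ l₂) = P l₁ * P l₂ := by
  simp [P]

@[simp] theorem P_singleton (g : Gx X) : P [g] = ell g := by simp [P]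

theorem P_reverse_reverse (l : List (Gx X)) : P l.reverse.reverse = P l := by
  rw [List.reverse_reverse]

/-- The collapse relation `a b a ρ a` for `b ∈ {a^l, a^r}`. -/
theorem collapse {a b : Gx X} (h : b = a.l ∨ b = a.r) : ell a * ell b * ell a = ell a := by
  rcases Nat.lt_or_ge a.ht 2 with h2 | h2
  · -- low height: b = gone
    have hb : b = Gx.gone := by
      rcases h with h | h
      · rw [h]; exact l_eq_gone (by omega)
      · rw [h]; exact r_eq_gone (by omega)
    rw [hb, ell_gone, mul_one, ell_idem]
  · set A := ell a with hA
    set L := ell a.l with hL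
    set R := ell a.r with hR
    set C := ell a.c with hC
    have S1 : C * L * A = A := rel_S1 h2
    have S2 : A * R * C = A := rel_S2 h2
    have S3 : R * C * A * C * L = R * C * L := rel_S3 h2
    have e1 : A * (R * (C * (A * (C * (L * A))))) = A := by
      calc A * (R * (C * (A * (C * (L * A)))))
          = (A * R * C) * (A * (C * L * A)) := by simp only [mul_assoc]
        _ = A * (A * A) := by rw [S2, S1]
        _ = A := by rw [ell_idem, ell_idem]
    have e2 : A * (R * (C * (A * (C * (L * A))))) = A * (L * A) := by
      calc A * (R * (C * (A * (C * (L * A)))))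
          = A * ((R * C * A * C * L) * A) := by simp only [mul_assoc]
        _ = A * ((R * C * L) * A) := by rw [S3]
        _ = (A * R * C) * (L * A) := by simp only [mul_assoc]
        _ = A * (L * A) := by rw [S2]
    have key : A * (L * A) = A := e2.symm.trans e1
    rcases h with h | h
    · rw [h, ← hL, mul_assoc]; exact key
    · rw [h, ← hR]
      calc A * R * A = A * R * (C * (L * A)) := by
            rw [show C * (L * A) = A from by rw [← mul_assoc]; exact S1]
        _ = (A * R * C) * (L * A) := by simp only [mul_assoc]
        _ = A * (L * A) := by rw [S2]
        _ = A := key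

/-- The uplifting relation `a b c ρ a d c` where `d = (c, b, a)`. -/
theorem uplift {a b c d : Gx X} (h2 : 2 ≤ d.ht) (hl : d.l = c) (hc : d.c = b)
    (hr : d.r = a) : ell a * ell b * ell c = ell a * ell d * ell c := by
  set A := ell a
  set B := ell b
  set C := ell c
  set D := ell d
  have S1 : B * C * D = D := by
    have := rel_S1 h2; rw [hl, hc] at this; exact this
  have S2 : D * A * B = D := by
    have := rel_S2 h2; rw [hr, hc] at this; exact this
  have S3 : A * B * D * B * C = A * B * C := by
    have := rel_S3 h2; rw [hl, hc, hr] at this; exact this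
  have bd : B * D = D := by
    calc B * D = B * (B * C * D) := by rw [S1]
      _ = (B * B) * (C * D) := by simp only [mul_assoc]
      _ = B * (C * D) := by rw [ell_idem]
      _ = D := by rw [← mul_assoc]; exact S1
  have db : D * B = D := by
    calc D * B = (D * A * B) * B := by rw [S2]
      _ = D * A * (B * B) := by simp only [mul_assoc]
      _ = D * A * B := by rw [ell_idem]
      _ = D := S2
  calc A * B * C = A * B * D * B * C := S3.symm
    _ = A * (B * D) * (B * C) := by simp only [mul_assoc]
    _ = A * D * (B * C) := by rw [bd]
    _ = A * (D * B) * C := by simp only [mul_assoc]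
    _ = A * D * C := by rw [db]

end FTaux
namespace FTaux

variable {X : Type}

open Gx Wd

/-- One step of a landscape. -/
def step (a b : Gx X) : Prop := Gx.stepUp a b ∨ Gx.stepDown a b

theorem step_ht {a b : Gx X} (h : step a b) : b.ht ≤ a.ht + 1 := by
  rcases h with h | h
  · exact stepUp_ht h
  · exact stepDown_ht h

theorem lamL_two {g : Gx X} (h : 2 ≤ g.ht) : Gx.lamL g = Gx.lamL g.c ++ [g.l, g] := by
  rw [Gx.lamL]; rw [dif_pos h]

theorem lamL_zero {g : Gx X} (h : g.ht = 0) : Gx.lamL g = [g] := by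
  rw [Gx.lamL]; rw [dif_neg (by omega), if_pos h]

theorem lamL_one {g : Gx X} (h : g.ht = 1) : Gx.lamL g = [Gx.gone, g] := by
  rw [Gx.lamL]; rw [dif_neg (by omega), if_neg (by omega)]

theorem lamR_two {g : Gx X} (h : 2 ≤ g.ht) : Gx.lamR g = [g, g.r] ++ Gx.lamR g.c := by
  rw [Gx.lamR]; rw [dif_pos h]

theorem lamR_zero {g : Gx X} (h : g.ht = 0) : Gx.lamR g = [g] := by
  rw [Gx.lamR]; rw [dif_neg (by omega), if_pos h]

theorem lamR_one {g : Gx X} (h : g.ht = 1) : Gx.lamR g = [g, Gx.gone] := by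
  rw [Gx.lamR]; rw [dif_neg (by omega), if_neg (by omega)]

/-- All the properties of `lamL` that we need, proved together. -/
theorem lamL_spec (g : Gx X) :
    (Gx.lamL g).head? = some Gx.gone ∧ (Gx.lamL g).getLast? = some g ∧
      (Gx.lamL g).Chain' Gx.stepUp ∧ P (Gx.lamL g) = ell g := by
  suffices h : ∀ n, ∀ g : Gx X, g.ht = n → (Gx.lamL g).head? = some Gx.gone ∧
      (Gx.lamL g).getLast? = some g ∧ (Gx.lamL g).Chain' Gx.stepUp ∧ P (Gx.lamL g) = ell g from
    h g.ht g rfl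
  intro n
  induction n using Nat.strong_induction_on with
  | _ n ih =>
  intro g hn
  rcases Nat.lt_or_ge g.ht 2 with h2 | h2
  · subst hn
    interval_cases h : g.ht
    · have hg : g = Gx.gone := eq_gone h
      subst hg
      simp [lamL_zero (g := (Gx.gone : Gx X)) rfl, List.isChain_singleton]
      exact List.isChain_singleton _
    · rw [lamL_one h]
      refine ⟨rfl, rfl, ?_, ?_⟩
      · refine List.isChain_cons_cons.2 ⟨Or.inl ?_, List.isChain_singleton _⟩
        rw [l_eq_gone (by omega)]
      · simp [gone_mul_ell]
  · have hc2 : g.c.ht + 2 = g.ht := ht_c_add h2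
    obtain ⟨ihh, ihl, ihc, ihp⟩ := ih g.c.ht (by omega) g.c rfl
    rw [lamL_two h2]
    have hne : Gx.lamL g.c ≠ [] := by
      intro h0; rw [h0] at ihh; simp at ihh
    refine ⟨?_, ?_, ?_, ?_⟩
    · rw [List.head?_append_of_ne_nil _ hne]; exact ihh
    · rw [List.getLast?_append_of_ne_nil _ (by simp)]; rfl
    · refine List.IsChain.append ihc ?_ ?_
      · exact List.isChain_cons_cons.2 ⟨Or.inl rfl, List.isChain_singleton _⟩
      · intro x hx y hy
        rw [ihl] at hx
        simp at hx hy
        subst hx; subst hy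
        exact c_mem_l h2
    · rw [P_append, ihp]
      rw [show P [g.l, g] = ell g.l * ell g by simp]
      rw [← mul_assoc]
      exact rel_S1 h2

theorem lamR_spec (g : Gx X) :
    (Gx.lamR g).head? = some g ∧ (Gx.lamR g).getLast? = some Gx.gone ∧
      (Gx.lamR g).Chain' Gx.stepDown ∧ P (Gx.lamR g) = ell g := by
  suffices h : ∀ n, ∀ g : Gx X, g.ht = n → (Gx.lamR g).head? = some g ∧
      (Gx.lamR g).getLast? = some Gx.gone ∧ (Gx.lamR g).Chain' Gx.stepDown ∧ P (Gx.lamR g) = ell g from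
    h g.ht g rfl
  intro n
  induction n using Nat.strong_induction_on with
  | _ n ih =>
  intro g hn
  rcases Nat.lt_or_ge g.ht 2 with h2 | h2
  · subst hn
    interval_cases h : g.ht
    · have hg : g = Gx.gone := eq_gone h
      subst hg
      simp [lamR_zero (g := (Gx.gone : Gx X)) rfl, List.isChain_singleton]
      exact List.isChain_singleton _
    · rw [lamR_one h]
      refine ⟨rfl, rfl, ?_, ?_⟩
      · refine List.isChain_cons_cons.2 ⟨Or.inl ?_, List.isChain_singleton _⟩
        rw [l_eq_gone (by omega)]
      · simp [ell_mul_gone]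
  · have hc2 : g.c.ht + 2 = g.ht := ht_c_add h2
    obtain ⟨ihh, ihl, ihc, ihp⟩ := ih g.c.ht (by omega) g.c rfl
    rw [lamR_two h2]
    have hne : Gx.lamR g.c ≠ [] := by
      intro h0; rw [h0] at ihh; simp at ihh
    refine ⟨?_, ?_, ?_, ?_⟩
    · rfl
    · rw [List.getLast?_append_of_ne_nil _ hne]; exact ihl
    · refine List.IsChain.append ?_ ihc ?_
      · exact List.isChain_cons_cons.2 ⟨Or.inr rfl, List.isChain_singleton _⟩
      · intro x hx y hy
        rw [ihh] at hy
        simp at hx hy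
        subst hx; subst hy
        exact c_mem_r h2
    · rw [P_append, ihp]
      rw [show P [g, g.r] = ell g * ell g.r by simp]
      exact rel_S2 h2

/-- The mountain of a letter. -/
def M (g : Gx X) : List (Gx X) := Gx.lamL g ++ (Gx.lamR g).tail

theorem M_spec (g : Gx X) :
    (M g).head? = some Gx.gone ∧ (M g).getLast? = some Gx.gone ∧
      (M g).Chain' step ∧ P (M g) = ell g := by
  obtain ⟨Lh, Ll, Lc, Lp⟩ := lamL_spec g
  obtain ⟨Rh, Rl, Rc, Rp⟩ := lamR_spec g
  have hLne : Gx.lamL g ≠ [] := by intro h0; rw [h0] at Lh; simp at Lh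
  have hcons : ∃ t, Gx.lamR g = g :: t := by
    rcases hR : Gx.lamR g with _ | ⟨h, t⟩
    · rw [hR] at Rh; simp at Rh
    · rw [hR] at Rh; simp at Rh; exact ⟨t, by rw [Rh]⟩
  obtain ⟨t, ht⟩ := hcons
  rw [ht] at Rl Rc Rp
  have hM : M g = Gx.lamL g ++ t := by rw [M, ht, List.tail_cons]
  rw [hM]
  refine ⟨?_, ?_, ?_, ?_⟩
  · rw [List.head?_append_of_ne_nil _ hLne]; exact Lh
  · rcases ht' : t with _ | ⟨y, t'⟩
    · subst ht'
      simp at Rl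
      simp only [List.append_nil]
      rw [Ll, Rl]
    · subst ht'
      rw [List.getLast?_append_of_ne_nil _ (by simp)]
      rw [List.getLast?_cons_cons] at Rl
      exact Rl
  · refine List.IsChain.append (Lc.imp fun a b h => Or.inl h) ?_ ?_
    · exact ((List.isChain_cons.1 Rc).2).imp fun a b h => Or.inr h
    · intro x hx y hy
      rw [Ll] at hx; simp at hx; subst hx
      exact Or.inr ((List.isChain_cons.1 Rc).1 y hy)
  · rw [P_append, Lp]
    rw [P_cons] at Rp
    calc ell g * P t = ell g * ell g * P t := by rw [ell_idem]
      _ = ell g * (ell g * P t) := by rw [mul_assoc]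
      _ = ell g * ell g := by rw [Rp]
      _ = ell g := ell_idem g

/-- Replacing every letter by its mountain. -/
def WL : List (Gx X) → List (Gx X)
  | [] => []
  | g :: t => M g ++ WL t

theorem WL_P (l : List (Gx X)) : P (WL l) = P l := by
  induction l with
  | nil => rfl
  | cons g t ih => rw [WL, P_append, ih, (M_spec g).2.2.2, P_cons]

theorem WL_head {g : Gx X} (t : List (Gx X)) :
    (WL (g :: t)).head? = some Gx.gone := by
  rw [WL]
  have h := (M_spec g).1
  have : M g ≠ [] := by intro h0; rw [h0] at h; simp at h
  rw [List.head?_append_of_ne_nil _ this]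
  exact h

theorem WL_chain (l : List (Gx X)) : (WL l).Chain' step := by
  induction l with
  | nil => exact List.isChain_nil
  | cons g t ih =>
      rw [WL]
      refine List.IsChain.append (M_spec g).2.2.1 ih ?_
      intro x hx y hy
      rw [(M_spec g).2.1] at hx
      simp at hx; subst hx
      rcases t with _ | ⟨h', t'⟩
      · simp [WL] at hy
      · rw [WL_head t'] at hy
        simp at hy; subst hy
        exact Or.inl (Or.inl rfl)

end FTaux
namespace FTaux

variable {X : Type}

open Gx Wd

/-- Single-peak landscapes. -/
def SP (L : List (Gx X)) : Prop :=
  ∃ U g D, L = U ++ g :: D ∧ List.Chain' Gx.stepUp (U ++ [g]) ∧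
    List.Chain' Gx.stepDown (g :: D)

theorem trichotomy (L : List (Gx X)) (hc : L.Chain' step) :
    L = [] ∨ SP L ∨ (∃ p x s, L = p ++ x :: x :: s) ∨
      (∃ p a b c s, L = p ++ a :: b :: c :: s ∧ Gx.stepDown a b ∧ Gx.stepUp b c ∧
        1 ≤ a.ht ∧ a.ht = c.ht ∧ b.ht + 1 = a.ht) := by
  induction L with
  | nil => exact Or.inl rfl
  | cons x t ih =>
    rcases t with _ | ⟨y, t'⟩
    · refine Or.inr (Or.inl ⟨[], x, [], rfl, List.isChain_singleton _, List.isChain_singleton _⟩)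
    · have hxy' : step x y := (List.isChain_cons_cons.1 hc).1
      have hc' : (y :: t').Chain' step := (List.isChain_cons_cons.1 hc).2
      by_cases hxy : x = y
      · exact Or.inr (Or.inr (Or.inl ⟨[], x, t', by rw [hxy]; rfl⟩))
      rcases ih hc' with hnil | hSP | hflat | hriver
      · simp at hnil
      · obtain ⟨U, g, D, hL, hU, hD⟩ := hSP
        rcases hxy' with hup | hdown
        · refine Or.inr (Or.inl ⟨x :: U, g, D, by rw [hL]; rfl, ?_, hD⟩)
          rw [List.cons_append]
          refine List.isChain_cons.2 ⟨?_, hU⟩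
          intro z hz
          have hhd : (U ++ [g]).head? = (U ++ g :: D).head? := by cases U <;> simp
          rw [hhd, ← hL] at hz
          simp at hz
          subst hz
          exact hup
        · rcases U with _ | ⟨u0, U'⟩
          · simp at hL
            obtain ⟨hg, hD'⟩ := hL
            refine Or.inr (Or.inl ⟨[], x, y :: t', rfl, List.isChain_singleton _, ?_⟩)
            refine List.isChain_cons_cons.2 ⟨hdown, ?_⟩
            rw [hg, hD']
            exact hD
          · rw [List.cons_append] at hL
            simp only [List.cons.injEq] at hL
            obtain ⟨hy0, ht'⟩ := hL
            obtain ⟨z, w, hzw⟩ : ∃ z w, U' ++ [g] = z :: w := by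
              rcases h0 : U' ++ [g] with _ | ⟨z, w⟩
              · exact absurd h0 (by simp)
              · exact ⟨z, w, rfl⟩
            have ht'2 : t' = z :: (w ++ D) := by
              rw [ht', show U' ++ g :: D = (U' ++ [g]) ++ D by simp, hzw]; rfl
            have hyz : Gx.stepUp y z := by
              subst hy0
              rw [show (y :: U') ++ [g] = y :: (U' ++ [g]) from rfl, hzw] at hU
              exact (List.isChain_cons_cons.1 hU).1
            rcases Nat.eq_zero_or_pos z.ht with hz0 | hz1
            · -- z = gone and y = gone, flat at (y, z)
              have hzg : z = Gx.gone := eq_gone hz0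
              have hyg : y = Gx.gone := by
                rw [hzg] at hyz
                exact stepUp_eq_gone hyz rfl
              refine Or.inr (Or.inr (Or.inl ⟨[x], y, w ++ D, ?_⟩))
              rw [ht'2, hzg, ← hyg]
              rfl
            rcases Nat.eq_zero_or_pos x.ht with hx0 | hx1
            · have hxg : x = Gx.gone := eq_gone hx0
              have hyg : y = Gx.gone := by
                rw [hxg] at hdown
                exact stepDown_eq_gone hdown rfl
              exact absurd (hxg.trans hyg.symm) hxy
            have e1 : y.ht + 1 = x.ht := stepDown_ht_eq hdown hx1
            have e2 : y.ht + 1 = z.ht := stepUp_ht_eq hyz hz1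
            refine Or.inr (Or.inr (Or.inr ⟨[], x, y, z, w ++ D, ?_, hdown, hyz, hx1,
              by omega, by omega⟩))
            rw [ht'2]
            rfl
      · obtain ⟨p, z, s, hps⟩ := hflat
        exact Or.inr (Or.inr (Or.inl ⟨x :: p, z, s, by rw [hps]; rfl⟩))
      · obtain ⟨p, a, b, c, s, hps, h1, h2, h3, h4, h5⟩ := hriver
        exact Or.inr (Or.inr (Or.inr ⟨x :: p, a, b, c, s, by rw [hps]; rfl, h1, h2, h3, h4, h5⟩))

/-- Sum of heights. -/
def sumHt (l : List (Gx X)) : ℕ := (l.map Gx.ht).sum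

@[simp] theorem sumHt_nil : sumHt ([] : List (Gx X)) = 0 := rfl
@[simp] theorem sumHt_cons (g : Gx X) (l : List (Gx X)) :
    sumHt (g :: l) = g.ht + sumHt l := by simp [sumHt]
theorem sumHt_append (l₁ l₂ : List (Gx X)) : sumHt (l₁ ++ l₂) = sumHt l₁ + sumHt l₂ := by
  simp [sumHt]

theorem chain_bound : ∀ (L : List (Gx X)) (k : ℕ), L.Chain' step →
    (∀ x ∈ L.head?, x.ht ≤ k) →
    (sumHt L + L.length ≤ (k + L.length) * L.length) ∧ (∀ x ∈ L, x.ht + 1 ≤ k + L.length) := by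
  intro L
  induction L with
  | nil => intro k _ _; simp
  | cons a t ih =>
    intro k hc hh
    have ha : a.ht ≤ k := hh a rfl
    have hht : ∀ x ∈ t.head?, x.ht ≤ k + 1 := by
      intro x hx
      have := (List.isChain_cons.1 hc).1 x hx
      have := step_ht this
      omega
    obtain ⟨ihs, ihe⟩ := ih (k + 1) (List.isChain_cons.1 hc).2 hht
    constructor
    · have hexp : (k + (t.length + 1)) * (t.length + 1) =
        (k + 1 + t.length) * t.length + (k + t.length + 1) := by ring
      simp only [List.length_cons, sumHt_cons]
      omega
    · intro x hx
      rcases List.mem_cons.1 hx with hx | hx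
      · subst hx; simp only [List.length_cons]; omega
      · have := ihe x hx
        simp only [List.length_cons]; omega

theorem good_sum_bound {L : List (Gx X)} (hc : L.Chain' step)
    (hh : L.head? = some Gx.gone) : sumHt L + L.length ≤ L.length * L.length := by
  have := (chain_bound L 0 hc (by intro x hx; rw [hh] at hx; simp at hx; subst hx; rfl)).1
  simpa using this

theorem good_elem_bound {L : List (Gx X)} (hc : L.Chain' step)
    (hh : L.head? = some Gx.gone) : ∀ x ∈ L, x.ht + 1 ≤ L.length := by
  have := (chain_bound L 0 hc (by intro x hx; rw [hh] at hx; simp at hx; subst hx; rfl)).2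
  simpa using this

theorem head?_mid (p : List (Gx X)) (a : Gx X) (s₁ s₂ : List (Gx X)) :
    (p ++ a :: s₁).head? = (p ++ a :: s₂).head? := by cases p <;> simp

/-- The reduction to a single-peak landscape. -/
theorem reduce : ∀ (n : ℕ) (L : List (Gx X)),
    L.length * L.length - sumHt L < n → L.Chain' step → L.head? = some Gx.gone →
    ∃ m, SP m ∧ P L = P m := by
  intro n
  induction n with
  | zero => intro L h; omega
  | succ n ih =>
    intro L hμ hc hh
    rcases trichotomy L hc with hnil | hSP | hflat | hriver
    · rw [hnil] at hh; simp at hh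
    · exact ⟨L, hSP, rfl⟩
    · -- flat move
      obtain ⟨p, x, s, rfl⟩ := hflat
      set L' : List (Gx X) := p ++ x :: s with hL'
      have hc' : L'.Chain' step := by
        obtain ⟨h1, h2, h3⟩ := List.isChain_append.1 hc
        refine List.IsChain.append h1 ?_ ?_
        · exact (List.isChain_cons_cons.1 h2).2
        · intro u hu v hv
          exact h3 u hu v hv
      have hh' : L'.head? = some Gx.gone := by
        rw [hL', head?_mid p x s (x :: s)]
        exact hh
      have hP : P (p ++ x :: x :: s) = P L' := by
        rw [hL', P_append, P_append]
        simp only [P_cons]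
        rw [show ell x * (ell x * P s) = ell x * P s from by rw [← mul_assoc, ell_idem]]
      have hb1 := good_sum_bound hc hh
      have hb2 := good_sum_bound hc' hh'
      have hx : x.ht + 1 ≤ (p ++ x :: x :: s).length :=
        good_elem_bound hc hh x (by simp)
      have hμ' : L'.length * L'.length - sumHt L' < n := by
        have hl1 : (p ++ x :: x :: s).length = (p.length + s.length + 1) + 1 := by
          simp; omega
        have hl2 : L'.length = p.length + s.length + 1 := by simp [hL']; omega
        have hs1 : sumHt (p ++ x :: x :: s) = sumHt p + x.ht + x.ht + sumHt s := by
          rw [sumHt_append]; simp; omega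
        have hs2 : sumHt L' = sumHt p + x.ht + sumHt s := by
          rw [hL', sumHt_append]; simp; omega
        set q := p.length + s.length + 1 with hq
        have hsq : (q + 1) * (q + 1) = q * q + 2 * q + 1 := by ring
        rw [hl1] at hμ hb1 hx
        rw [hl2] at hb2 ⊢
        omega
      obtain ⟨m, hm, hPm⟩ := ih L' hμ' hc' hh'
      exact ⟨m, hm, hP.trans hPm⟩
    · obtain ⟨p, a, b, c, s, rfl, hab, hbc, ha1, hac, hb⟩ := hriver
      obtain ⟨h1, h2, h3⟩ := List.isChain_append.1 hc
      have hcs : (c :: s).Chain' step := (List.isChain_cons_cons.1 (List.isChain_cons_cons.1 h2).2).2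
      by_cases haceq : a = c
      · -- collapse move
        subst haceq
        set L' : List (Gx X) := p ++ a :: s with hL'
        have hc' : L'.Chain' step := by
          refine List.IsChain.append h1 ?_ ?_
          · exact List.isChain_cons.2 ⟨fun y hy => (List.isChain_cons.1 hcs).1 y hy,
              (List.isChain_cons.1 hcs).2⟩
          · intro u hu v hv
            refine h3 u hu v ?_
            simpa using hv
        have hh' : L'.head? = some Gx.gone := by
          rw [hL', head?_mid p a s (b :: a :: s)]
          exact hh
        have hP : P (p ++ a :: b :: a :: s) = P L' := by
          rw [hL', P_append, P_append]
          simp only [P_cons]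
          rw [show ell a * (ell b * (ell a * P s)) = ell a * P s from by
            rw [← mul_assoc, ← mul_assoc, collapse hab]]
        have hb1 := good_sum_bound hc hh
        have hb2 := good_sum_bound hc' hh'
        have hbm : b.ht + 1 ≤ (p ++ a :: b :: a :: s).length :=
          good_elem_bound hc hh b (by simp)
        have ham : a.ht + 1 ≤ (p ++ a :: b :: a :: s).length :=
          good_elem_bound hc hh a (by simp)
        have hμ' : L'.length * L'.length - sumHt L' < n := by
          have hl1 : (p ++ a :: b :: a :: s).length = (p.length + s.length + 1) + 2 := by
            simp; omega
          have hl2 : L'.length = p.length + s.length + 1 := by simp [hL']; omega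
          have hs1 : sumHt (p ++ a :: b :: a :: s) =
              sumHt p + a.ht + a.ht + b.ht + sumHt s := by
            rw [sumHt_append]; simp; omega
          have hs2 : sumHt L' = sumHt p + a.ht + sumHt s := by
            rw [hL', sumHt_append]; simp; omega
          set q := p.length + s.length + 1 with hq
          have hsq : (q + 2) * (q + 2) = q * q + 4 * q + 4 := by ring
          rw [hl1] at hμ hb1 hbm ham
          rw [hl2] at hb2 ⊢
          omega
        obtain ⟨m, hm, hPm⟩ := ih L' hμ' hc' hh'
        exact ⟨m, hm, hP.trans hPm⟩
      · -- uplift move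
        have hd : (PreG.node c.1 b.1 a.1).IsG := by
          refine PreG.IsG.node c.2 b.2 a.2 ?_ ?_ ?_ ?_ ?_ ?_
          · show 1 ≤ c.ht; omega
          · show c.ht = a.ht; omega
          · show b.ht + 1 = c.ht; omega
          · intro hca
            exact haceq (Subtype.ext hca).symm
          · rcases hbc with h | h
            · exact Or.inl (congrArg Subtype.val h)
            · exact Or.inr (congrArg Subtype.val h)
          · rcases hab with h | h
            · exact Or.inl (congrArg Subtype.val h)
            · exact Or.inr (congrArg Subtype.val h)
        set d : Gx X := ⟨PreG.node c.1 b.1 a.1, hd⟩ with hdd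
        have hdl : d.l = c := Subtype.ext rfl
        have hdc : d.c = b := Subtype.ext rfl
        have hdr : d.r = a := Subtype.ext rfl
        have hdht : d.ht = b.ht + 2 := by
          show (PreG.node c.1 b.1 a.1).ht = b.ht + 2
          show c.1.ht + 1 = b.ht + 2
          show c.ht + 1 = b.ht + 2
          omega
        set L' : List (Gx X) := p ++ a :: d :: c :: s with hL'
        have hc' : L'.Chain' step := by
          refine List.IsChain.append h1 ?_ ?_
          · refine List.isChain_cons_cons.2 ⟨Or.inl (Or.inr hdr.symm), ?_⟩
            refine List.isChain_cons_cons.2 ⟨Or.inr (Or.inl hdl.symm), hcs⟩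
          · intro u hu v hv
            refine h3 u hu v ?_
            simpa using hv
        have hh' : L'.head? = some Gx.gone := by
          rw [hL', head?_mid p a (d :: c :: s) (b :: c :: s)]
          exact hh
        have hP : P (p ++ a :: b :: c :: s) = P L' := by
          rw [hL', P_append, P_append]
          simp only [P_cons]
          have h4 : ell a * ell b * ell c = ell a * ell d * ell c := uplift
            (by rw [hdht]; omega) hdl hdc hdr
          rw [show ell a * (ell b * (ell c * P s)) = ell a * (ell d * (ell c * P s)) from by
            have := congrArg (· * P s) h4
            simpa [mul_assoc] using this]
        have hb1 := good_sum_bound hc hh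
        have hb2 := good_sum_bound hc' hh'
        have hμ' : L'.length * L'.length - sumHt L' < n := by
          have hl1 : (p ++ a :: b :: c :: s).length = p.length + s.length + 3 := by
            simp; omega
          have hl2 : L'.length = p.length + s.length + 3 := by simp [hL']; omega
          have hs1 : sumHt (p ++ a :: b :: c :: s) =
              sumHt p + a.ht + b.ht + c.ht + sumHt s := by
            rw [sumHt_append]; simp; omega
          have hs2 : sumHt L' = sumHt p + a.ht + (b.ht + 2) + c.ht + sumHt s := by
            rw [hL', sumHt_append]; simp [hdht]; omega
          set q := p.length + s.length + 3 with hq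
          rw [hl1] at hμ hb1
          rw [hl2] at hb2 ⊢
          omega
        obtain ⟨m, hm, hPm⟩ := ih L' hμ' hc' hh'
        exact ⟨m, hm, hP.trans hPm⟩

end FTaux
namespace FTaux

variable {X : Type}

open Gx Wd

theorem zipDown {D : List (Gx X)} {g : Gx X} (hD : List.Chain' Gx.stepDown (g :: D)) :
    ∀ t : FT1 X, ell g * (P D * (P D.reverse * (ell g * t))) = ell g * t := by
  induction D generalizing g with
  | nil =>
      intro t
      rw [P_nil, List.reverse_nil, P_nil, one_mul, one_mul, ← mul_assoc, ell_idem]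
  | cons d D' ih =>
      intro t
      have h1 : Gx.stepDown g d := (List.isChain_cons_cons.1 hD).1
      have h2 : List.Chain' Gx.stepDown (d :: D') := (List.isChain_cons_cons.1 hD).2
      calc ell g * (P (d :: D') * (P (d :: D').reverse * (ell g * t)))
          = ell g * (ell d * (P D' * (P D'.reverse * (ell d * (ell g * t))))) := by
            rw [List.reverse_cons, P_cons, P_append, P_singleton]
            simp only [mul_assoc]
        _ = ell g * (ell d * (ell g * t)) := by rw [ih h2]
        _ = (ell g * ell d * ell g) * t := by simp only [mul_assoc]
        _ = ell g * t := by rw [collapse h1]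

theorem zipUp {U : List (Gx X)} {g : Gx X} (hU : List.Chain' Gx.stepUp (U ++ [g])) :
    ∀ t : FT1 X, ell g * (P U.reverse * (P U * (ell g * t))) = ell g * t := by
  induction U using List.reverseRecOn generalizing g with
  | nil =>
      intro t
      rw [P_nil, List.reverse_nil, P_nil, one_mul, one_mul, ← mul_assoc, ell_idem]
  | append_singleton U' u ih =>
      intro t
      have hc' : List.Chain' Gx.stepUp (U' ++ [u]) := hU.left_of_append
      have hug : Gx.stepUp u g := by
        have h3 := (List.isChain_append.1 hU).2.2
        refine h3 u ?_ g rfl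
        rw [List.getLast?_concat]
        rfl
      calc ell g * (P (U' ++ [u]).reverse * (P (U' ++ [u]) * (ell g * t)))
          = ell g * (ell u * (P U'.reverse * (P U' * (ell u * (ell g * t))))) := by
            rw [List.reverse_append, P_append, P_append, P_singleton]
            simp only [List.reverse_cons, List.reverse_nil, List.nil_append, P_cons, P_nil,
              mul_one, P_singleton, mul_assoc]
        _ = ell g * (ell u * (ell g * t)) := by rw [ih hc']
        _ = (ell g * ell u * ell g) * t := by simp only [mul_assoc]
        _ = ell g * t := by rw [collapse (by rcases hug with h | h; exacts [Or.inl h, Or.inr h])]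

theorem sp_inv {m : List (Gx X)} (h : SP m) : P m * P m.reverse * P m = P m := by
  obtain ⟨U, g, D, rfl, hU, hD⟩ := h
  have hrev : (U ++ g :: D).reverse = D.reverse ++ ([g] ++ U.reverse) := by
    rw [List.reverse_append, List.reverse_cons]
    simp [List.append_assoc]
  rw [hrev]
  rw [show U ++ g :: D = U ++ ([g] ++ D) from rfl]
  simp only [P_append, P_singleton]
  calc (P U * (ell g * P D)) * (P D.reverse * (ell g * P U.reverse)) * (P U * (ell g * P D))
      = P U * (ell g * (P D * (P D.reverse * (ell g * (P U.reverse * (P U * (ell g * P D))))))) := by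
        simp only [mul_assoc]
    _ = P U * (ell g * (P U.reverse * (P U * (ell g * P D)))) := by rw [zipDown hD]
    _ = P U * (ell g * P D) := by rw [zipUp hU]

theorem SP_reverse {m : List (Gx X)} (h : SP m) : SP m.reverse := by
  obtain ⟨U, g, D, rfl, hU, hD⟩ := h
  refine ⟨D.reverse, g, U.reverse, ?_, ?_, ?_⟩
  · rw [List.reverse_append, List.reverse_cons]
    simp [List.append_assoc]
  · have h0 : List.Chain' (flip Gx.stepUp) (g :: D) := hD.imp fun a b hab => hab
    have h2 := List.isChain_reverse.2 h0
    rw [List.reverse_cons] at h2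
    exact h2
  · have h0 : List.Chain' (flip Gx.stepDown) (U ++ [g]) := hU.imp fun a b hab => hab
    have h2 := List.isChain_reverse.2 h0
    rw [List.reverse_append] at h2
    simp at h2; exact h2

theorem cls_eq_P (u : Wd X) : cls u = P (Wd.toL u) := by
  induction u using FreeSemigroup.recOnMul with
  | ih1 g => rw [show Wd.toL (FreeSemigroup.of g) = [g] from rfl, P_singleton]; rfl
  | ih2 x v ihx ihv =>
      have htoL : Wd.toL (FreeSemigroup.of x * v) = x :: Wd.toL v := rfl
      rw [htoL, P_cons, ← ihv]
      rfl

/-- Regularity of `FT1 X`. -/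
theorem ft1_regular (a : FT1 X) : ∃ b : FT1 X, a * b * a = a ∧ b * a * b = b := by
  induction a using Con.induction_on with
  | H u =>
  have h1 : cls u = P (WL (Wd.toL u)) := by rw [cls_eq_P, WL_P]
  have hchain := WL_chain (Wd.toL u)
  have hhead : (WL (Wd.toL u)).head? = some Gx.gone := by
    have : Wd.toL u = u.head :: u.tail := rfl
    rw [this]
    exact WL_head _
  obtain ⟨m, hm, hPm⟩ := reduce (((WL (Wd.toL u)).length * (WL (Wd.toL u)).length -
    sumHt (WL (Wd.toL u))) + 1) (WL (Wd.toL u)) (by omega) hchain hhead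
  have hcls : cls u = P m := by rw [h1, hPm]
  refine ⟨P m.reverse, ?_, ?_⟩
  · show cls u * P m.reverse * cls u = cls u
    rw [hcls]
    exact sp_inv hm
  · show P m.reverse * cls u * P m.reverse = P m.reverse
    rw [hcls]
    have h2 := sp_inv (SP_reverse hm)
    rwa [List.reverse_reverse] at h2

end FTaux
namespace FTaux

variable {X : Type} {S : Type} [Semigroup S]

open Gx Wd

theorem collapse_abstract {M : Type*} [Monoid M] {A L R C : M}
    (hA : A * A = A) (S1 : C * L * A = A) (S2 : A * R * C = A)
    (S3 : R * C * A * C * L = R * C * L) : A * L * A = A ∧ A * R * A = A := by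
  have e1 : A * (R * (C * (A * (C * (L * A))))) = A := by
    calc A * (R * (C * (A * (C * (L * A)))))
        = (A * R * C) * (A * (C * L * A)) := by simp only [mul_assoc]
      _ = A * (A * A) := by rw [S2, S1]
      _ = A := by rw [hA, hA]
  have e2 : A * (R * (C * (A * (C * (L * A))))) = A * (L * A) := by
    calc A * (R * (C * (A * (C * (L * A)))))
        = A * ((R * C * A * C * L) * A) := by simp only [mul_assoc]
      _ = A * ((R * C * L) * A) := by rw [S3]
      _ = (A * R * C) * (L * A) := by simp only [mul_assoc]
      _ = A * (L * A) := by rw [S2]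
  have key : A * (L * A) = A := e2.symm.trans e1
  constructor
  · rw [mul_assoc]; exact key
  · have hCLA : C * (L * A) = A := by rw [← mul_assoc]; exact S1
    calc A * R * A = A * R * (C * (L * A)) := by rw [hCLA]
      _ = (A * R * C) * (L * A) := by simp only [mul_assoc]
      _ = A * (L * A) := by rw [S2]
      _ = A := key

open Classical in
/-- The skeleton map on `PreG X`, with values chosen inside `T¹`. -/
noncomputable def phi0 (φ' : X → S) (T : Set S) : PreG X → WithOne S
  | .one => 1
  | .base x => (φ' x : WithOne S)
  | .node l c r =>
      if h : ∃ hh : WithOne S, (∃ t ∈ T, hh = (t : WithOne S)) ∧ hh * hh = hh ∧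
          (phi0 φ' T c * phi0 φ' T l) * hh = hh ∧ hh * (phi0 φ' T r * phi0 φ' T c) = hh ∧
          (phi0 φ' T r * phi0 φ' T c) * hh * (phi0 φ' T c * phi0 φ' T l) =
            (phi0 φ' T r * phi0 φ' T c) * (phi0 φ' T c * phi0 φ' T l)
      then h.choose else 1

open Classical in
theorem phi0_node (φ' : X → S) (T : Set S) (l c r : PreG X) :
    phi0 φ' T (.node l c r) =
      if h : ∃ hh : WithOne S, (∃ t ∈ T, hh = (t : WithOne S)) ∧ hh * hh = hh ∧
          (phi0 φ' T c * phi0 φ' T l) * hh = hh ∧ hh * (phi0 φ' T r * phi0 φ' T c) = hh ∧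
          (phi0 φ' T r * phi0 φ' T c) * hh * (phi0 φ' T c * phi0 φ' T l) =
            (phi0 φ' T r * phi0 φ' T c) * (phi0 φ' T c * phi0 φ' T l)
      then h.choose else 1 := by
  rw [phi0]

variable (φ' : X → S) (T : Set S)

/-- The required properties of the skeleton map. -/
def Q (p : PreG X) : Prop :=
  (phi0 φ' T p * phi0 φ' T p = phi0 φ' T p) ∧
  (1 ≤ p.ht → ∃ t ∈ T, phi0 φ' T p = (t : WithOne S)) ∧
  (2 ≤ p.ht →
    phi0 φ' T p.center * phi0 φ' T p.left * phi0 φ' T p = phi0 φ' T p ∧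
    phi0 φ' T p * phi0 φ' T p.right * phi0 φ' T p.center = phi0 φ' T p ∧
    phi0 φ' T p.right * phi0 φ' T p.center * phi0 φ' T p * phi0 φ' T p.center *
        phi0 φ' T p.left =
      phi0 φ' T p.right * phi0 φ' T p.center * phi0 φ' T p.left)

theorem collapseS {p b : PreG X} (hp : p.IsG) (hQ : Q φ' T p)
    (hb : b = p.left ∨ b = p.right) :
    phi0 φ' T p * phi0 φ' T b * phi0 φ' T p = phi0 φ' T p := by
  obtain ⟨hidem, _, hS⟩ := hQ
  cases hp with
  | one =>
      have hb1 : b = PreG.one := by rcases hb with h | h <;> simp [h, PreG.left, PreG.right]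
      rw [hb1]
      show phi0 φ' T PreG.one * 1 * phi0 φ' T PreG.one = phi0 φ' T PreG.one
      rw [mul_one]; exact hidem
  | base x =>
      have hb1 : b = PreG.one := by rcases hb with h | h <;> simp [h, PreG.left, PreG.right]
      rw [hb1]
      show _ * 1 * _ = _
      rw [mul_one]; exact hidem
  | @node l c r hl hc hr h1 h2 h3 h4 h5 h6 =>
      have h2' : 2 ≤ (PreG.node l c r).ht := by
        show 2 ≤ l.ht + 1; omega
      obtain ⟨S1, S2, S3⟩ := hS h2'
      obtain ⟨c1, c2⟩ := collapse_abstract hidem S1 S2 S3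
      rcases hb with h | h
      · rw [h]; exact c1
      · rw [h]; exact c2

theorem memT_mul {x y : WithOne S} (hmul : ∀ a ∈ T, ∀ b ∈ T, a * b ∈ T)
    (hx : ∃ t ∈ T, x = (t : WithOne S)) (hy : ∃ t ∈ T, y = (t : WithOne S)) :
    ∃ t ∈ T, x * y = (t : WithOne S) := by
  obtain ⟨tx, htx, rfl⟩ := hx
  obtain ⟨ty, hty, rfl⟩ := hy
  exact ⟨tx * ty, hmul tx htx ty hty, by rw [WithOne.coe_mul]⟩

theorem Q_of_IsG (hidem : ∀ x : X, φ' x * φ' x = φ' x)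
    (hmul : ∀ a ∈ T, ∀ b ∈ T, a * b ∈ T)
    (hreg : ∀ a ∈ T, ∃ b ∈ T, a * b * a = a ∧ b * a * b = b)
    (hXT : ∀ x : X, φ' x ∈ T) :
    ∀ p : PreG X, p.IsG → Q φ' T p := by
  intro p hp
  induction hp with
  | one =>
      refine ⟨mul_one 1, ?_, ?_⟩
      · intro h; simp [PreG.ht] at h
      · intro h; simp [PreG.ht] at h
  | base x =>
      refine ⟨?_, ?_, ?_⟩
      · show (φ' x : WithOne S) * (φ' x : WithOne S) = (φ' x : WithOne S)
        rw [← WithOne.coe_mul, hidem x]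
      · intro _; exact ⟨φ' x, hXT x, rfl⟩
      · intro h; simp [PreG.ht] at h
  | @node l c r hl hc hr h1 h2 h3 h4 h5 h6 ihl ihc ihr =>
      set Pl := phi0 φ' T l with hPl
      set Pc := phi0 φ' T c with hPc
      set Pr := phi0 φ' T r with hPr
      have hrht : 1 ≤ r.ht := by omega
      have hlT : ∃ t ∈ T, Pl = (t : WithOne S) := ihl.2.1 h1
      have hrT : ∃ t ∈ T, Pr = (t : WithOne S) := ihr.2.1 hrht
      have hcsplit : Pc = 1 ∨ ∃ t ∈ T, Pc = (t : WithOne S) := by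
        rcases Nat.eq_zero_or_pos c.ht with h0 | h0
        · left
          rw [hPc, PreG_eq_one hc h0]
          rfl
        · exact Or.inr (ihc.2.1 h0)
      have heT : ∃ t ∈ T, Pr * Pc = (t : WithOne S) := by
        rcases hcsplit with h | h
        · rw [h, mul_one]; exact hrT
        · exact memT_mul T hmul hrT h
      have hfT : ∃ t ∈ T, Pc * Pl = (t : WithOne S) := by
        rcases hcsplit with h | h
        · rw [h, one_mul]; exact hlT
        · exact memT_mul T hmul h hlT
      have hcc : Pc * Pc = Pc := ihc.1
      have hrcr : Pr * Pc * Pr = Pr := collapseS φ' T hr ihr h6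
      have hlcl : Pl * Pc * Pl = Pl := collapseS φ' T hl ihl h5
      have he : (Pr * Pc) * (Pr * Pc) = Pr * Pc := by
        calc (Pr * Pc) * (Pr * Pc) = (Pr * Pc * Pr) * Pc := by simp only [mul_assoc]
          _ = Pr * Pc := by rw [hrcr]
      have hf : (Pc * Pl) * (Pc * Pl) = Pc * Pl := by
        calc (Pc * Pl) * (Pc * Pl) = Pc * (Pl * Pc * Pl) := by simp only [mul_assoc]
          _ = Pc * Pl := by rw [hlcl]
      have hefT : ∃ t ∈ T, (Pr * Pc) * (Pc * Pl) = (t : WithOne S) := memT_mul T hmul heT hfT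
      obtain ⟨w, hwT, hefw⟩ := hefT
      obtain ⟨w', hw'T, hw1, hw2⟩ := hreg w hwT
      set e := Pr * Pc with hee
      set f := Pc * Pl with hff
      -- the sandwich element
      have hex : ∃ hh : WithOne S, (∃ t ∈ T, hh = (t : WithOne S)) ∧ hh * hh = hh ∧
          f * hh = hh ∧ hh * e = hh ∧ e * hh * f = e * f := by
        refine ⟨f * (w' : WithOne S) * e, ?_, ?_, ?_, ?_, ?_⟩
        · refine memT_mul T hmul (memT_mul T hmul hfT ⟨w', hw'T, rfl⟩) heT
        · calc (f * w' * e) * (f * w' * e) = f * w' * (e * f) * w' * e := by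
                simp only [mul_assoc]
            _ = f * ((w' : WithOne S) * w * w') * e := by
                rw [hefw]; simp only [mul_assoc, WithOne.coe_mul]
            _ = f * w' * e := by
                rw [show ((w' : WithOne S) * w * w') = ((w' : WithOne S)) from by
                  rw [← WithOne.coe_mul, ← WithOne.coe_mul, hw2]]
        · calc f * (f * w' * e) = (f * f) * w' * e := by simp only [mul_assoc]
            _ = f * w' * e := by rw [hf]
        · calc (f * w' * e) * e = f * w' * (e * e) := by simp only [mul_assoc]
            _ = f * w' * e := by rw [he]
        · calc e * (f * w' * e) * f = (e * f) * w' * (e * f) := by simp only [mul_assoc]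
            _ = (w : WithOne S) * w' * w := by rw [hefw]
            _ = (w : WithOne S) := by
                rw [← WithOne.coe_mul, ← WithOne.coe_mul, hw1]
            _ = e * f := hefw.symm
      have hval : phi0 φ' T (PreG.node l c r) = hex.choose := by
        rw [phi0_node]
        exact dif_pos hex
      obtain ⟨hmem, hidem', hfh, hhe, hehf⟩ := hex.choose_spec
      rw [← hval] at hmem hidem' hfh hhe hehf
      set Ph := phi0 φ' T (PreG.node l c r) with hPh
      refine ⟨hidem', fun _ => hmem, fun _ => ⟨?_, ?_, ?_⟩⟩
      · show Pc * Pl * Ph = Ph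
        exact hfh
      · show Ph * Pr * Pc = Ph
        rw [mul_assoc]
        exact hhe
      · show Pr * Pc * Ph * Pc * Pl = Pr * Pc * Pl
        calc Pr * Pc * Ph * Pc * Pl = (e * Ph) * f := by
              rw [hee, hff]; simp only [mul_assoc]
          _ = e * f := hehf
          _ = Pr * Pc * Pl := by
              rw [hee, hff]
              calc (Pr * Pc) * (Pc * Pl) = Pr * (Pc * Pc) * Pl := by simp only [mul_assoc]
                _ = Pr * Pc * Pl := by rw [hcc]

end FTaux
namespace FTaux

variable {X : Type} {S : Type} [Semigroup S]

open Gx Wd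

/-- The bundled hypotheses. -/
def Hyp (φ' : X → S) (T : Set S) : Prop :=
  (∀ x : X, φ' x * φ' x = φ' x) ∧ (∀ a ∈ T, ∀ b ∈ T, a * b ∈ T) ∧
    (∀ a ∈ T, ∃ b ∈ T, a * b * a = a ∧ b * a * b = b) ∧ (∀ x : X, φ' x ∈ T)

/-- The lift of the skeleton map to words. -/
noncomputable def F (φ' : X → S) (T : Set S) : Wd X →ₙ* WithOne S :=
  FreeSemigroup.lift (fun g : Gx X => phi0 φ' T g.1)

theorem F_of (φ' : X → S) (T : Set S) (g : Gx X) :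
    F φ' T (Wd.og g) = phi0 φ' T g.1 := FreeSemigroup.lift_of _ _

theorem F_of' (φ' : X → S) (T : Set S) (g : Gx X) :
    F φ' T (FreeSemigroup.of g) = phi0 φ' T g.1 := FreeSemigroup.lift_of _ _

theorem F_resp (φ' : X → S) (T : Set S) (H : Hyp φ' T) :
    ∀ u v : Wd X, rho X u v → F φ' T u = F φ' T v := by
  obtain ⟨hidem, hmul, hreg, hXT⟩ := H
  have hQ : ∀ g : Gx X, Q φ' T g.1 := fun g => Q_of_IsG φ' T hidem hmul hreg hXT g.1 g.2
  intro u v h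
  have hle := (Con.conGen_le
    (c := Con.ker (F φ' T)) (r := rhoBase X)).2 ?_
  · exact hle h
  rintro a b (⟨g, hg | hg | hg⟩ | ⟨g, h2, hg | hg | hg⟩) <;>
    obtain ⟨rfl, rfl⟩ := hg <;>
    show F φ' T _ = F φ' T _ <;> simp only [map_mul, F_of]
  · show phi0 φ' T PreG.one * _ = _
    rw [show phi0 φ' T PreG.one = 1 from rfl, one_mul]
  · show _ * phi0 φ' T PreG.one = _
    rw [show phi0 φ' T PreG.one = 1 from rfl, mul_one]
  · exact (hQ g).1
  · exact ((hQ g).2.2 h2).1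
  · exact ((hQ g).2.2 h2).2.1
  · exact ((hQ g).2.2 h2).2.2

/-- The induced map on `FT1 X`. -/
noncomputable def fbar (φ' : X → S) (T : Set S) (H : Hyp φ' T) : FT1 X → WithOne S :=
  fun a => Con.liftOn a (fun u => F φ' T u) (F_resp φ' T H)

theorem fbar_cls (φ' : X → S) (T : Set S) (H : Hyp φ' T) (u : Wd X) :
    fbar φ' T H (cls u) = F φ' T u := rfl

theorem fbar_mul (φ' : X → S) (T : Set S) (H : Hyp φ' T) (a b : FT1 X) :
    fbar φ' T H (a * b) = fbar φ' T H a * fbar φ' T H b := by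
  induction a using Con.induction_on with
  | H u =>
  induction b using Con.induction_on with
  | H v =>
  show F φ' T (u * v) = F φ' T u * F φ' T v
  exact map_mul _ u v

theorem fbar_one (φ' : X → S) (T : Set S) (H : Hyp φ' T) : fbar φ' T H 1 = 1 := by
  show F φ' T (Wd.og Gx.gone) = 1
  rw [F_of]
  rfl

theorem F_mem (φ' : X → S) (T : Set S) (H : Hyp φ' T) :
    ∀ u : Wd X, F φ' T u = 1 ∨ ∃ t ∈ T, F φ' T u = (t : WithOne S) := by
  obtain ⟨hidem, hmul, hreg, hXT⟩ := H
  have hQ : ∀ g : Gx X, Q φ' T g.1 := fun g => Q_of_IsG φ' T hidem hmul hreg hXT g.1 g.2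
  intro u
  induction u using FreeSemigroup.recOnMul with
  | ih1 g =>
      rw [F_of']
      rcases Nat.eq_zero_or_pos (Gx.ht g) with h0 | h0
      · left
        rw [PreG_eq_one g.2 h0]
        rfl
      · exact Or.inr ((hQ g).2.1 h0)
  | ih2 x v ihx ihv =>
      rw [map_mul]
      rcases ihx with h1 | ⟨t1, ht1, h1⟩ <;> rcases ihv with h2 | ⟨t2, ht2, h2⟩
      · left; rw [h1, h2, one_mul]
      · right; rw [h1, one_mul]; exact ⟨t2, ht2, h2⟩
      · right; rw [h2, mul_one]; exact ⟨t1, ht1, h1⟩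
      · right
        rw [h1, h2, ← WithOne.coe_mul]
        exact ⟨t1 * t2, hmul t1 ht1 t2 ht2, rfl⟩

theorem F_one_iff (φ' : X → S) (T : Set S) (H : Hyp φ' T) :
    ∀ u : Wd X, F φ' T u = 1 → cls u = (1 : FT1 X) := by
  intro u
  induction u using FreeSemigroup.recOnMul with
  | ih1 g =>
      intro h
      rw [F_of'] at h
      rcases Nat.eq_zero_or_pos (Gx.ht g) with h0 | h0
      · have hg : g = Gx.gone := eq_gone h0
        rw [hg]
        rfl
      · exfalso
        obtain ⟨t, _, ht⟩ :=
          (Q_of_IsG φ' T H.1 H.2.1 H.2.2.1 H.2.2.2 g.1 g.2).2.1 h0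
        rw [ht] at h
        exact WithOne.coe_ne_one h
  | ih2 x v ihx ihv =>
      intro h
      rw [map_mul] at h
      have h1 : F φ' T (FreeSemigroup.of x) = 1 ∧ F φ' T v = 1 := by
        rcases F_mem φ' T H (FreeSemigroup.of x) with hx | ⟨t1, _, hx⟩ <;>
          rcases F_mem φ' T H v with hv | ⟨t2, _, hv⟩
        · exact ⟨hx, hv⟩
        · rw [hx, hv, one_mul] at h; exact absurd h (WithOne.coe_ne_one)
        · rw [hx, hv, mul_one] at h; exact absurd h (WithOne.coe_ne_one)
        · rw [hx, hv, ← WithOne.coe_mul] at h; exact absurd h (WithOne.coe_ne_one)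
      have e1 : cls (FreeSemigroup.of x) = (1 : FT1 X) := ihx h1.1
      have e2 : cls v = (1 : FT1 X) := ihv h1.2
      show cls (FreeSemigroup.of x * v) = (1 : FT1 X)
      rw [cls_mul, e1, e2, one_mul]

end FTaux
theorem statement14 {X : Type} [Nonempty X] {S : Type} [Semigroup S]
    (φ' : X → S) (hinj : Function.Injective φ') (hidem : ∀ x : X, φ' x * φ' x = φ' x)
    (T : Set S)
    (hmul : ∀ a ∈ T, ∀ b ∈ T, a * b ∈ T)
    (hreg : ∀ a ∈ T, ∃ b ∈ T, a * b * a = a ∧ b * a * b = b)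
    (hXT : ∀ x : X, φ' x ∈ T)
    (hweak : ∀ T' ⊆ T, (∀ a ∈ T', ∀ b ∈ T', a * b ∈ T') →
      (∀ a ∈ T', ∃ b ∈ T', a * b * a = a ∧ b * a * b = b) →
      (∀ x : X, φ' x ∈ T') → T' = T) :
    ∃ φb : FT1 X → S,
      (∀ a ∈ FTset X, ∀ b ∈ FTset X, φb (a * b) = φb a * φb b) ∧
      (∀ x : X, φb (cls (Wd.og (Gx.ofX x))) = φ' x) ∧
      φb '' FTset X = T := by
  classical
  have H : FTaux.Hyp φ' T := ⟨hidem, hmul, hreg, hXT⟩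
  set Fb : FT1 X → WithOne S := FTaux.fbar φ' T H with hFbdef
  set φb : FT1 X → S := fun a =>
    if h : Fb a = 1 then φ' (Classical.arbitrary X) else WithOne.unone h with hφb
  have hin : ∀ a : FT1 X, a ∈ FTset X ↔ a ≠ (1 : FT1 X) := fun a => Iff.rfl
  have hFb1 : Fb 1 = 1 := FTaux.fbar_one φ' T H
  have hFbmul : ∀ a b : FT1 X, Fb (a * b) = Fb a * Fb b := FTaux.fbar_mul φ' T H
  have hmem : ∀ a ∈ FTset X, ∃ t ∈ T, Fb a = (t : WithOne S) := by
    intro a ha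
    induction a using Con.induction_on with
    | H u =>
    rcases FTaux.F_mem φ' T H u with h | h
    · exact absurd (FTaux.F_one_iff φ' T H u h) ((hin _).1 ha)
    · exact h
  have hne1 : ∀ a ∈ FTset X, Fb a ≠ 1 := by
    intro a ha
    obtain ⟨t, _, h⟩ := hmem a ha
    rw [h]
    exact WithOne.coe_ne_one
  have hcoe : ∀ a ∈ FTset X, ((φb a : S) : WithOne S) = Fb a ∧ φb a ∈ T := by
    intro a ha
    obtain ⟨t, htT, h⟩ := hmem a ha
    have h1 : Fb a ≠ 1 := hne1 a ha
    have h2 : φb a = WithOne.unone h1 := by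
      rw [hφb]
      simp only [dif_neg h1]
    constructor
    · rw [h2, WithOne.coe_unone]
    · rw [h2]
      have : ((WithOne.unone h1 : S) : WithOne S) = (t : WithOne S) := by
        rw [WithOne.coe_unone, h]
      rwa [WithOne.coe_inj.1 this]
  have hclosed : ∀ a ∈ FTset X, ∀ b ∈ FTset X, a * b ∈ FTset X := by
    intro a ha b hb
    rw [hin]
    intro hab
    have h1 : Fb (a * b) = 1 := by rw [hab]; exact hFb1
    rw [hFbmul] at h1
    obtain ⟨ta, _, hta⟩ := hmem a ha
    obtain ⟨tb, _, htb⟩ := hmem b hb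
    rw [hta, htb, ← WithOne.coe_mul] at h1
    exact WithOne.coe_ne_one h1
  have hmult : ∀ a ∈ FTset X, ∀ b ∈ FTset X, φb (a * b) = φb a * φb b := by
    intro a ha b hb
    have hab := hclosed a ha b hb
    have h1 := (hcoe _ hab).1
    rw [hFbmul, ← (hcoe a ha).1, ← (hcoe b hb).1, ← WithOne.coe_mul] at h1
    exact WithOne.coe_inj.1 h1
  have hx : ∀ x : X, Fb (cls (Wd.og (Gx.ofX x))) = ((φ' x : S) : WithOne S) := by
    intro x
    show FTaux.F φ' T (Wd.og (Gx.ofX x)) = _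
    rw [FTaux.F_of]
    rfl
  have hxFT : ∀ x : X, cls (Wd.og (Gx.ofX x)) ∈ FTset X := by
    intro x
    rw [hin]
    intro h0
    have := hx x
    rw [h0, hFb1] at this
    exact WithOne.coe_ne_one this.symm
  have hφx : ∀ x : X, φb (cls (Wd.og (Gx.ofX x))) = φ' x := by
    intro x
    have h1 := (hcoe _ (hxFT x)).1
    rw [hx x] at h1
    exact WithOne.coe_inj.1 h1
  refine ⟨φb, hmult, hφx, ?_⟩
  refine hweak (φb '' FTset X) ?_ ?_ ?_ ?_
  · rintro s ⟨a, ha, rfl⟩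
    exact (hcoe a ha).2
  · rintro s ⟨a, ha, rfl⟩ s' ⟨b, hb, rfl⟩
    exact ⟨a * b, hclosed a ha b hb, hmult a ha b hb⟩
  · rintro s ⟨a, ha, rfl⟩
    obtain ⟨b, hb1, hb2⟩ := FTaux.ft1_regular a
    by_cases hb : b ∈ FTset X
    · refine ⟨φb b, ⟨b, hb, rfl⟩, ?_, ?_⟩
      · have e1 : φb (a * b) = φb a * φb b := hmult a ha b hb
        have e2 : φb (a * b * a) = φb (a * b) * φb a := hmult _ (hclosed a ha b hb) a ha
        rw [← e1, ← e2, hb1]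
      · have e1 : φb (b * a) = φb b * φb a := hmult b hb a ha
        have e2 : φb (b * a * b) = φb (b * a) * φb b := hmult _ (hclosed b hb a ha) b hb
        rw [← e1, ← e2, hb2]
    · have hb0 : b = (1 : FT1 X) := by
        by_contra h0
        exact hb ((hin b).2 h0)
      have haa : a * a = a := by
        rw [hb0, mul_one] at hb1
        exact hb1
      refine ⟨φb a, ⟨a, ha, rfl⟩, ?_, ?_⟩ <;>
      · have e2 : φb (a * a * a) = φb (a * a) * φb a := hmult _ (hclosed a ha a ha) a ha
        have e1 : φb (a * a) = φb a * φb a := hmult a ha a ha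
        rw [← e1, ← e2, haa, haa]
  · intro x
    exact ⟨cls (Wd.og (Gx.ofX x)), hxFT x, hφx x⟩
end

section
/- Let X be a set of cardinality n ≥ 2 and let g ∈ G_i(X) for some i ≥ 1. Then |G(g)| = (2^{2i−1}(3n−5)+4)/3, where G(g) = {g₁ ∈ G(X) : g₁^l = g or g₁^r = g}, and |G_{i+1}(X)| = ((4^{i−1}(3n−5)+2)/3) · |G_i(X)|. -/
section Stmt15Aux

variable {X : Type}

/-- The set of `IsG` elements whose left or right entry is `g`, at the `PreG` level. -/
def Aset (g : PreG X) : Set (PreG X) := {p | p.IsG ∧ (p.left = g ∨ p.right = g)}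

/-- The set of `IsG` elements of height `j`, at the `PreG` level. -/
def Sset (X : Type) (j : ℕ) : Set (PreG X) := {p | p.IsG ∧ p.ht = j}

lemma isG_ht_zero {p : PreG X} (h : p.IsG) (h0 : p.ht = 0) : p = PreG.one := by
  cases h with
  | one => rfl
  | base x => simp [PreG.ht] at h0
  | node hl hc hr h1 h2 h3 h4 h5 h6 => simp [PreG.ht] at h0

lemma isG_ht_one {p : PreG X} (h : p.IsG) (h0 : p.ht = 1) : ∃ x, p = PreG.base x := by
  cases h with
  | one => simp [PreG.ht] at h0
  | base x => exact ⟨x, rfl⟩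
  | node hl hc hr h1 h2 h3 h4 h5 h6 => simp [PreG.ht] at h0; omega

lemma ht_of_step {p c : PreG X} (hp : p.IsG) (hc : p.left = c ∨ p.right = c)
    (h1 : 1 ≤ c.ht) : p.ht = c.ht + 1 := by
  cases hp with
  | one =>
      rcases hc with h | h <;> simp [PreG.left, PreG.right] at h <;>
        rw [← h] at h1 <;> simp [PreG.ht] at h1
  | base x =>
      rcases hc with h | h <;> simp [PreG.left, PreG.right] at h <;>
        rw [← h] at h1 <;> simp [PreG.ht] at h1
  | @node l c' r hl hc' hr h1' h2 h3 h4 h5 h6 =>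
      rcases hc with h | h
      · simp only [PreG.left] at h
        subst h; simp [PreG.ht]
      · simp only [PreG.right] at h
        subst h; simp [PreG.ht, h2]

lemma mem_Aset_base {x : X} {p : PreG X} :
    p ∈ Aset (PreG.base x : PreG X) ↔
      (∃ y : X, y ≠ x ∧ p = PreG.node (.base x) .one (.base y)) ∨
      (∃ y : X, y ≠ x ∧ p = PreG.node (.base y) .one (.base x)) := by
  constructor
  · rintro ⟨hp, hor⟩
    cases hp with
    | one => rcases hor with h | h <;> simp [PreG.left, PreG.right] at h
    | base z => rcases hor with h | h <;> simp [PreG.left, PreG.right] at h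
    | @node l c r hl hc hr h1 h2 h3 h4 h5 h6 =>
        rcases hor with h | h
        · simp only [PreG.left] at h; subst h
          have hl1 : (PreG.base x : PreG X).ht = 1 := by simp [PreG.ht]
          have hc0 : c.ht = 0 := by omega
          have hcone := isG_ht_zero hc hc0
          subst hcone
          have hr1 : r.ht = 1 := by omega
          obtain ⟨y, rfl⟩ := isG_ht_one hr hr1
          refine Or.inl ⟨y, ?_, rfl⟩
          intro hxy; exact h4 (by rw [hxy])
        · simp only [PreG.right] at h; subst h
          have hl1 : l.ht = 1 := by rw [h2]; simp [PreG.ht]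
          have hc0 : c.ht = 0 := by omega
          have hcone := isG_ht_zero hc hc0
          subst hcone
          obtain ⟨y, rfl⟩ := isG_ht_one hl hl1
          refine Or.inr ⟨y, ?_, rfl⟩
          intro hxy; exact h4 (by rw [hxy])
  · have hbase : ∀ y : X, y ≠ x → (PreG.node (.base x) .one (.base y) : PreG X).IsG := by
      intro y hy
      refine PreG.IsG.node (.base x) .one (.base y) ?_ ?_ ?_ ?_ ?_ ?_ <;>
        simp [PreG.ht, PreG.left, PreG.right]
      intro h; exact hy h.symm
    have hbase' : ∀ y : X, y ≠ x → (PreG.node (.base y) .one (.base x) : PreG X).IsG := by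
      intro y hy
      refine PreG.IsG.node (.base y) .one (.base x) ?_ ?_ ?_ ?_ ?_ ?_ <;>
        simp [PreG.ht, PreG.left, PreG.right]
      exact hy
    rintro (⟨y, hy, rfl⟩ | ⟨y, hy, rfl⟩)
    · exact ⟨hbase y hy, Or.inl rfl⟩
    · exact ⟨hbase' y hy, Or.inr rfl⟩

lemma mem_Aset_node {gl gc gr : PreG X} (hg : (PreG.node gl gc gr).IsG) {p : PreG X} :
    p ∈ Aset (PreG.node gl gc gr) ↔
      (∃ c r, (c = gl ∨ c = gr) ∧ r ∈ Aset c ∧ r ≠ PreG.node gl gc gr ∧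
        p = PreG.node (.node gl gc gr) c r) ∨
      (∃ c l, (c = gl ∨ c = gr) ∧ l ∈ Aset c ∧ l ≠ PreG.node gl gc gr ∧
        p = PreG.node l c (.node gl gc gr)) := by
  cases hg with
  | @node _ _ _ hgl hgc hgr hg1 hg2 hg3 hg4 hg5 hg6 =>
  constructor
  · rintro ⟨hp, hor⟩
    cases hp with
    | one => rcases hor with h | h <;> simp [PreG.left, PreG.right] at h
    | base z => rcases hor with h | h <;> simp [PreG.left, PreG.right] at h
    | @node l c r hl hc hr h1 h2 h3 h4 h5 h6 =>
        rcases hor with h | h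
        · simp only [PreG.left] at h; subst h
          simp only [PreG.left, PreG.right] at h5
          exact Or.inl ⟨c, r, h5, ⟨hr, h6.imp Eq.symm Eq.symm⟩, fun hrg => h4 hrg.symm, rfl⟩
        · simp only [PreG.right] at h; subst h
          simp only [PreG.left, PreG.right] at h6
          exact Or.inr ⟨c, l, h6, ⟨hl, h5.imp Eq.symm Eq.symm⟩, h4, rfl⟩
  · have hcht : ∀ c : PreG X, (c = gl ∨ c = gr) → c.ht = gl.ht := by
      rintro c (rfl | rfl)
      · rfl
      · exact hg2.symm
    have hcIsG : ∀ c : PreG X, (c = gl ∨ c = gr) → c.IsG := by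
      rintro c (rfl | rfl)
      · exact hgl
      · exact hgr
    have hg0 : (PreG.node gl gc gr).IsG :=
      PreG.IsG.node hgl hgc hgr hg1 hg2 hg3 hg4 hg5 hg6
    rintro (⟨c, r, hcor, ⟨hrG, hror⟩, hrne, rfl⟩ | ⟨c, l, hcor, ⟨hlG, hlor⟩, hlne, rfl⟩)
    · refine ⟨PreG.IsG.node hg0 (hcIsG c hcor) hrG ?_ ?_ ?_ ?_ ?_ (hror.imp Eq.symm Eq.symm), Or.inl rfl⟩
      · simp [PreG.ht]
      · have := ht_of_step hrG hror (by rw [hcht c hcor]; exact hg1)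
        simp [PreG.ht, this, hcht c hcor]
      · simp [PreG.ht, hcht c hcor]
      · exact fun h => hrne h.symm
      · rcases hcor with rfl | rfl
        · exact Or.inl rfl
        · exact Or.inr rfl
    · refine ⟨PreG.IsG.node hlG (hcIsG c hcor) hg0 ?_ ?_ ?_ hlne ?_ ?_, Or.inr rfl⟩
      · have := ht_of_step hlG hlor (by rw [hcht c hcor]; exact hg1)
        rw [this, hcht c hcor]; omega
      · have := ht_of_step hlG hlor (by rw [hcht c hcor]; exact hg1)
        simp [PreG.ht, this, hcht c hcor]
      · exact (ht_of_step hlG hlor (by rw [hcht c hcor]; exact hg1)).symm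
      · exact hlor.imp Eq.symm Eq.symm
      · rcases hcor with rfl | rfl
        · exact Or.inl rfl
        · exact Or.inr rfl

lemma Aset_card {X : Type} [Finite X] {n : ℕ} (hn : 2 ≤ n) (hX : Nat.card X = n) :
    ∀ i : ℕ, 1 ≤ i → ∀ g : PreG X, g.IsG → g.ht = i →
      (Aset g).Finite ∧ 3 * (Aset g).ncard = 2 ^ (2 * i - 1) * (3 * n - 5) + 4 := by
  intro i hi
  induction i, hi using Nat.le_induction with
  | base =>
    intro g hg hht
    obtain ⟨x, rfl⟩ := isG_ht_one hg hht
    have hset : Aset (PreG.base x : PreG X) =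
        (fun y : X => PreG.node (.base x) .one (.base y)) '' {y | y ≠ x} ∪
        (fun y : X => PreG.node (.base y) .one (.base x)) '' {y | y ≠ x} := by
      ext p
      rw [Set.mem_union, mem_Aset_base]
      simp only [Set.mem_image, Set.mem_setOf_eq]
      constructor
      · rintro (⟨y, hy, rfl⟩ | ⟨y, hy, rfl⟩)
        · exact Or.inl ⟨y, hy, rfl⟩
        · exact Or.inr ⟨y, hy, rfl⟩
      · rintro (⟨y, hy, rfl⟩ | ⟨y, hy, rfl⟩)
        · exact Or.inl ⟨y, hy, rfl⟩
        · exact Or.inr ⟨y, hy, rfl⟩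
    have hXfin : ({y : X | y ≠ x}).Finite := Set.toFinite _
    have hinj1 : Function.Injective (fun y : X => (PreG.node (.base x) .one (.base y) : PreG X)) := by
      intro a b h; simpa using h
    have hinj2 : Function.Injective (fun y : X => (PreG.node (.base y) .one (.base x) : PreG X)) := by
      intro a b h; simpa using h
    have hdisj : Disjoint ((fun y : X => (PreG.node (.base x) .one (.base y) : PreG X)) '' {y | y ≠ x})
        ((fun y : X => (PreG.node (.base y) .one (.base x) : PreG X)) '' {y | y ≠ x}) := by
      rw [Set.disjoint_left]
      rintro p ⟨y, hy, rfl⟩ ⟨z, hz, hzp⟩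
      simp only [PreG.node.injEq, PreG.base.injEq] at hzp
      exact hy hzp.2.2.symm
    have hsub : {y : X | y ≠ x} = Set.univ \ {x} := by ext y; simp
    have hscard : ({y : X | y ≠ x}).ncard = n - 1 := by
      rw [hsub, Set.ncard_diff (Set.subset_univ {x}) (Set.finite_singleton x), Set.ncard_univ,
        Set.ncard_singleton, hX]
    have hcard1 := Set.ncard_image_of_injective {y : X | y ≠ x} hinj1
    have hcard2 := Set.ncard_image_of_injective {y : X | y ≠ x} hinj2
    constructor
    · rw [hset]; exact (hXfin.image _).union (hXfin.image _)
    · rw [hset, Set.ncard_union_eq hdisj (hXfin.image _) (hXfin.image _), hcard1, hcard2,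
        hscard]
      have h1 : (2:ℕ) ^ (2 * 1 - 1) = 2 := by norm_num
      rw [h1]; omega
  | succ i hi IH =>
    intro g hg hht
    cases hg with
    | one => rw [show (PreG.one : PreG X).ht = 0 from rfl] at hht; omega
    | base x => rw [show (PreG.base x : PreG X).ht = 1 from rfl] at hht; omega
    | @node gl gc gr hgl hgc hgr hg1 hg2 hg3 hg4 hg5 hg6 =>
      have hht' : gl.ht = i := by
        have h := hht
        rw [show (PreG.node gl gc gr).ht = gl.ht + 1 from rfl] at h
        omega
      have hg0 : (PreG.node gl gc gr).IsG := PreG.IsG.node hgl hgc hgr hg1 hg2 hg3 hg4 hg5 hg6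
      obtain ⟨finL, cardL⟩ := IH gl hgl hht'
      obtain ⟨finR, cardR⟩ := IH gr hgr (by rw [← hg2]; exact hht')
      have hmemL : PreG.node gl gc gr ∈ Aset gl := ⟨hg0, Or.inl rfl⟩
      have hmemR : PreG.node gl gc gr ∈ Aset gr := ⟨hg0, Or.inr rfl⟩
      have finD1 : (Aset gl \ {PreG.node gl gc gr}).Finite := finL.diff
      have finD2 : (Aset gr \ {PreG.node gl gc gr}).Finite := finR.diff
      have hset : Aset (PreG.node gl gc gr) =
          ((fun r => PreG.node (.node gl gc gr) gl r) '' (Aset gl \ {PreG.node gl gc gr}) ∪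
           (fun r => PreG.node (.node gl gc gr) gr r) '' (Aset gr \ {PreG.node gl gc gr})) ∪
          ((fun l => PreG.node l gl (.node gl gc gr)) '' (Aset gl \ {PreG.node gl gc gr}) ∪
           (fun l => PreG.node l gr (.node gl gc gr)) '' (Aset gr \ {PreG.node gl gc gr})) := by
        ext p
        rw [Set.mem_union, Set.mem_union, Set.mem_union, mem_Aset_node hg0]
        simp only [Set.mem_image, Set.mem_diff, Set.mem_singleton_iff]
        constructor
        · rintro (⟨c, r, hcor, hr, hrne, rfl⟩ | ⟨c, l, hcor, hl, hlne, rfl⟩)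
          · rcases hcor with rfl | rfl
            · exact Or.inl (Or.inl ⟨r, ⟨hr, hrne⟩, rfl⟩)
            · exact Or.inl (Or.inr ⟨r, ⟨hr, hrne⟩, rfl⟩)
          · rcases hcor with rfl | rfl
            · exact Or.inr (Or.inl ⟨l, ⟨hl, hlne⟩, rfl⟩)
            · exact Or.inr (Or.inr ⟨l, ⟨hl, hlne⟩, rfl⟩)
        · rintro ((⟨r, ⟨hr, hrne⟩, rfl⟩ | ⟨r, ⟨hr, hrne⟩, rfl⟩) |
            (⟨l, ⟨hl, hlne⟩, rfl⟩ | ⟨l, ⟨hl, hlne⟩, rfl⟩))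
          · exact Or.inl ⟨gl, r, Or.inl rfl, hr, hrne, rfl⟩
          · exact Or.inl ⟨gr, r, Or.inr rfl, hr, hrne, rfl⟩
          · exact Or.inr ⟨gl, l, Or.inl rfl, hl, hlne, rfl⟩
          · exact Or.inr ⟨gr, l, Or.inr rfl, hl, hlne, rfl⟩
      have hinjr : ∀ c : PreG X, Function.Injective
          (fun r => PreG.node (.node gl gc gr) c r) := by
        intro c a b h; simpa using h
      have hinjl : ∀ c : PreG X, Function.Injective
          (fun l => PreG.node l c (.node gl gc gr)) := by
        intro c a b h; simpa using h
      have hd12 : Disjoint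
          ((fun r => PreG.node (.node gl gc gr) gl r) '' (Aset gl \ {PreG.node gl gc gr}))
          ((fun r => PreG.node (.node gl gc gr) gr r) '' (Aset gr \ {PreG.node gl gc gr})) := by
        rw [Set.disjoint_left]
        rintro p ⟨a, ha, rfl⟩ ⟨b, hb, hbp⟩
        simp only [PreG.node.injEq] at hbp
        exact hg4 hbp.2.1.symm
      have hd34 : Disjoint
          ((fun l => PreG.node l gl (.node gl gc gr)) '' (Aset gl \ {PreG.node gl gc gr}))
          ((fun l => PreG.node l gr (.node gl gc gr)) '' (Aset gr \ {PreG.node gl gc gr})) := by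
        rw [Set.disjoint_left]
        rintro p ⟨a, ha, rfl⟩ ⟨b, hb, hbp⟩
        simp only [PreG.node.injEq] at hbp
        exact hg4 hbp.2.1.symm
      have hdLR : Disjoint
          ((fun r => PreG.node (.node gl gc gr) gl r) '' (Aset gl \ {PreG.node gl gc gr}) ∪
           (fun r => PreG.node (.node gl gc gr) gr r) '' (Aset gr \ {PreG.node gl gc gr}))
          ((fun l => PreG.node l gl (.node gl gc gr)) '' (Aset gl \ {PreG.node gl gc gr}) ∪
           (fun l => PreG.node l gr (.node gl gc gr)) '' (Aset gr \ {PreG.node gl gc gr})) := by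
        rw [Set.disjoint_left]
        rintro p (⟨a, ha, rfl⟩ | ⟨a, ha, rfl⟩) (⟨b, hb, hbp⟩ | ⟨b, hb, hbp⟩) <;>
          simp only [PreG.node.injEq] at hbp <;> exact hb.2 hbp.1
      have hD1card : (Aset gl \ {PreG.node gl gc gr}).ncard = (Aset gl).ncard - 1 :=
        Set.ncard_diff_singleton_of_mem hmemL
      have hD2card : (Aset gr \ {PreG.node gl gc gr}).ncard = (Aset gr).ncard - 1 :=
        Set.ncard_diff_singleton_of_mem hmemR
      have ha1 : 1 ≤ (Aset gl).ncard := (Set.ncard_pos finL).mpr ⟨_, hmemL⟩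
      have hb1 : 1 ≤ (Aset gr).ncard := (Set.ncard_pos finR).mpr ⟨_, hmemR⟩
      constructor
      · rw [hset]
        exact ((finD1.image _).union (finD2.image _)).union
          ((finD1.image _).union (finD2.image _))
      · rw [hset, Set.ncard_union_eq hdLR ((finD1.image _).union (finD2.image _))
            ((finD1.image _).union (finD2.image _)),
          Set.ncard_union_eq hd12 (finD1.image _) (finD2.image _),
          Set.ncard_union_eq hd34 (finD1.image _) (finD2.image _),
          Set.ncard_image_of_injective _ (hinjr gl), Set.ncard_image_of_injective _ (hinjr gr),
          Set.ncard_image_of_injective _ (hinjl gl), Set.ncard_image_of_injective _ (hinjl gr),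
          hD1card, hD2card]
        have hpow : (2:ℕ) ^ (2 * (i+1) - 1) * (3 * n - 5) =
            4 * (2 ^ (2 * i - 1) * (3 * n - 5)) := by
          have h2 : 2 * (i+1) - 1 = (2 * i - 1) + 2 := by omega
          rw [h2, pow_add]; ring
        rw [hpow]
        generalize 2 ^ (2 * i - 1) * (3 * n - 5) = E at cardL cardR ⊢
        omega

lemma Sset_finite {X : Type} [Finite X] : ∀ j : ℕ, (Sset X j).Finite := by
  intro j
  induction j using Nat.strong_induction_on with
  | _ j IH =>
    rcases j with _ | _ | j
    · refine Set.Finite.subset (Set.finite_singleton PreG.one) ?_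
      rintro p ⟨hp, hht⟩
      exact isG_ht_zero hp hht
    · refine Set.Finite.subset (Set.finite_range (PreG.base : X → PreG X)) ?_
      rintro p ⟨hp, hht⟩
      obtain ⟨x, rfl⟩ := isG_ht_one hp hht
      exact ⟨x, rfl⟩
    · refine Set.Finite.subset (Set.Finite.image
        (fun t : PreG X × PreG X × PreG X => PreG.node t.1 t.2.1 t.2.2)
        ((IH (j+1) (by omega)).prod ((IH j (by omega)).prod (IH (j+1) (by omega))))) ?_
      rintro p ⟨hp, hht⟩
      cases hp with
      | one => rw [show (PreG.one : PreG X).ht = 0 from rfl] at hht; omega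
      | base x => rw [show (PreG.base x : PreG X).ht = 1 from rfl] at hht; omega
      | @node l c r hl hc hr h1 h2 h3 h4 h5 h6 =>
        have hlht : l.ht = j + 1 := by
          rw [show (PreG.node l c r).ht = l.ht + 1 from rfl] at hht; omega
        exact ⟨(l, c, r), ⟨⟨hl, hlht⟩, ⟨hc, show c.ht = j by omega⟩, ⟨hr, show r.ht = j+1 by omega⟩⟩, rfl⟩

lemma Sset_card {X : Type} [Finite X] {n : ℕ} (hn : 2 ≤ n) (hX : Nat.card X = n)
    (i : ℕ) (hi : 1 ≤ i) :
    3 * (Sset X (i+1)).ncard = (4 ^ (i - 1) * (3 * n - 5) + 2) * (Sset X i).ncard := by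
  classical
  have hfinF : (Sset X i).Finite := Sset_finite i
  have hfinF1 : (Sset X (i+1)).Finite := Sset_finite (i+1)
  set F : Finset (PreG X) := hfinF.toFinset with hF
  set F1 : Finset (PreG X) := hfinF1.toFinset with hF1
  have hmemF : ∀ p : PreG X, p ∈ F ↔ (p.IsG ∧ p.ht = i) := by
    intro p; rw [hF, Set.Finite.mem_toFinset]; exact Iff.rfl
  have hmemF1 : ∀ p : PreG X, p ∈ F1 ↔ (p.IsG ∧ p.ht = i+1) := by
    intro p; rw [hF1, Set.Finite.mem_toFinset]; exact Iff.rfl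
  have hAcard : ∀ g ∈ F,
      (F1.filter (fun p => p.left = g ∨ p.right = g)).card = (Aset g).ncard := by
    intro g hgF
    obtain ⟨hgG, hght⟩ := (hmemF g).mp hgF
    have hgh1 : 1 ≤ g.ht := by omega
    have hsets : Aset g = ↑(F1.filter (fun p => p.left = g ∨ p.right = g)) := by
      ext p
      simp only [Finset.coe_filter, Set.mem_setOf_eq, hmemF1]
      constructor
      · rintro ⟨hp, hor⟩
        have := ht_of_step hp hor hgh1
        exact ⟨⟨hp, by omega⟩, hor⟩
      · rintro ⟨⟨hp, _⟩, hor⟩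
        exact ⟨hp, hor⟩
    rw [hsets, Set.ncard_coe_finset]
  have hswap : ∑ g ∈ F, (F1.filter (fun p => p.left = g ∨ p.right = g)).card
      = ∑ p ∈ F1, (F.filter (fun g => p.left = g ∨ p.right = g)).card := by
    simp only [Finset.card_filter]
    rw [Finset.sum_comm]
  have hinner : ∀ p ∈ F1, (F.filter (fun g => p.left = g ∨ p.right = g)).card = 2 := by
    intro p hp
    obtain ⟨hpG, hpht⟩ := (hmemF1 p).mp hp
    cases hpG with
    | one => rw [show (PreG.one : PreG X).ht = 0 from rfl] at hpht; omega
    | base x =>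
        rw [show (PreG.base x : PreG X).ht = 1 from rfl] at hpht; omega
    | @node l c r hl hc hr h1 h2 h3 h4 h5 h6 =>
        have hlht : l.ht = i := by
          rw [show (PreG.node l c r).ht = l.ht + 1 from rfl] at hpht; omega
        have hfl : F.filter (fun g => (PreG.node l c r).left = g ∨
            (PreG.node l c r).right = g) = {l, r} := by
          ext g
          simp only [Finset.mem_filter, Finset.mem_insert, Finset.mem_singleton, hmemF]
          constructor
          · rintro ⟨-, h | h⟩
            · exact Or.inl h.symm
            · exact Or.inr h.symm
          · rintro (rfl | rfl)
            · exact ⟨⟨hl, hlht⟩, Or.inl rfl⟩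
            · exact ⟨⟨hr, by omega⟩, Or.inr rfl⟩
        rw [hfl, Finset.card_insert_of_notMem (by simpa using h4), Finset.card_singleton]
  have htwo : ∑ g ∈ F, (F1.filter (fun p => p.left = g ∨ p.right = g)).card
      = 2 * F1.card := by
    rw [hswap, Finset.sum_congr rfl hinner, Finset.sum_const, smul_eq_mul, mul_comm]
  have key : 6 * F1.card = F.card * (2 ^ (2*i-1) * (3*n-5) + 4) := by
    have h1 : ∑ g ∈ F, 3 * (Aset g).ncard = ∑ g ∈ F, (2 ^ (2*i-1) * (3*n-5) + 4) := by
      refine Finset.sum_congr rfl (fun g hgF => ?_)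
      obtain ⟨hgG, hght⟩ := (hmemF g).mp hgF
      exact (Aset_card hn hX i hi g hgG hght).2
    rw [Finset.sum_const, smul_eq_mul] at h1
    have h2 : ∑ g ∈ F, 3 * (Aset g).ncard = 3 * ∑ g ∈ F, (Aset g).ncard :=
      (Finset.mul_sum _ _ _).symm
    have h3 : ∑ g ∈ F, (Aset g).ncard
        = ∑ g ∈ F, (F1.filter (fun p => p.left = g ∨ p.right = g)).card :=
      Finset.sum_congr rfl (fun g hgF => (hAcard g hgF).symm)
    rw [h2, h3, htwo] at h1
    omega
  have h2pow : (2:ℕ) ^ (2*i-1) * (3*n-5) + 4 = 2 * (4 ^ (i-1) * (3*n-5)) + 4 := by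
    have h' : 2*i-1 = 2*(i-1)+1 := by omega
    rw [h', pow_succ, pow_mul]
    have h4 : ((2:ℕ)^2) = 4 := rfl
    rw [h4]; ring
  rw [h2pow] at key
  rw [Set.ncard_eq_toFinset_card _ hfinF1, Set.ncard_eq_toFinset_card _ hfinF, ← hF1, ← hF]
  generalize 4 ^ (i-1) * (3*n-5) = K at key ⊢
  have hring : F.card * (2*K+4) = 2 * ((K+2) * F.card) := by ring
  rw [hring] at key
  omega

end Stmt15Aux

theorem statement15 {X : Type} [Finite X] (n : ℕ) (hn : 2 ≤ n)
    (hX : Nat.card X = n) (g : Gx X) (i : ℕ) (hi : 1 ≤ i) (hg : g.ht = i) :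
    3 * Set.ncard {g₁ : Gx X | g₁.l = g ∨ g₁.r = g} = 2 ^ (2 * i - 1) * (3 * n - 5) + 4 ∧
    3 * Set.ncard {h : Gx X | h.ht = i + 1} =
      (4 ^ (i - 1) * (3 * n - 5) + 2) * Set.ncard {h : Gx X | h.ht = i} := by
  classical
  have hval1 : Subtype.val '' {g₁ : Gx X | g₁.l = g ∨ g₁.r = g} = Aset g.1 := by
    ext p
    constructor
    · rintro ⟨g₁, hmem, rfl⟩
      refine ⟨g₁.2, ?_⟩
      rcases hmem with h | h
      · exact Or.inl (congrArg Subtype.val h)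
      · exact Or.inr (congrArg Subtype.val h)
    · rintro ⟨hp, hor⟩
      refine ⟨⟨p, hp⟩, ?_, rfl⟩
      rcases hor with h | h
      · exact Or.inl (Subtype.ext h)
      · exact Or.inr (Subtype.ext h)
  have hval2 : ∀ j : ℕ, Subtype.val '' {h : Gx X | h.ht = j} = Sset X j := by
    intro j; ext p
    constructor
    · rintro ⟨h₁, hmem, rfl⟩; exact ⟨h₁.2, hmem⟩
    · rintro ⟨hp, hht⟩; exact ⟨⟨p, hp⟩, hht, rfl⟩
  constructor
  · have h := (Aset_card hn hX i hi g.1 g.2 hg).2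
    rw [← hval1, Set.ncard_image_of_injective _ Subtype.val_injective] at h
    exact h
  · have h := Sset_card hn hX i hi
    rw [← hval2 (i+1), ← hval2 i, Set.ncard_image_of_injective _ Subtype.val_injective,
      Set.ncard_image_of_injective _ Subtype.val_injective] at h
    exact h
end
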